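/- arXiv:1210.8365 — 11 statements merged into one kernel-verified Lean document; each statement's English description precedes it below -/
import Mathlib

section
/- For every natural number k, there exists a finite family F of finite simple graphs such that an arbitrary finite simple graph G has threshold-width at most k if and only if no induced subgraph of G is isomorphic to a member of F. -/
open SimpleGraph

/-- The graph `2K₂`: two disjoint edges on four vertices. -/
def twoK2 : SimpleGraph (Fin 4) :=
  SimpleGraph.fromEdgeSet {s(0, 1), s(2, 3)}

/-- A graph is a threshold graph if it has no induced subgraph isomorphic to
`P₄`, `C₄`, or `2K₂`. -/
def IsThresholdGraph {V : Type*} (H : SimpleGraph V) : Prop :=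
  IsEmpty (SimpleGraph.pathGraph 4 ↪g H) ∧ IsEmpty (SimpleGraph.cycleGraph 4 ↪g H) ∧
    IsEmpty (twoK2 ↪g H)

/-- A set of vertices is independent if its members are pairwise nonadjacent. -/
def IsIndepSet {V : Type*} (G : SimpleGraph V) (s : Set V) : Prop :=
  s.Pairwise fun u v => ¬ G.Adj u v

/-- `G` has threshold-width at most `k`: there are `k` independent sets `N i` and a
threshold graph `H` on the same vertex set containing `G` such that every edge of `H`
not in `G` has both endpoints in a common `N i`. -/
def ThresholdWidthAtMost {V : Type*} (G : SimpleGraph V) (k : ℕ) : Prop :=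
  ∃ (N : Fin k → Set V) (H : SimpleGraph V),
    (∀ i, _root_.IsIndepSet G (N i)) ∧ IsThresholdGraph H ∧ G ≤ H ∧
      ∀ x y, H.Adj x y → ¬ G.Adj x y → ∃ i, x ∈ N i ∧ y ∈ N i

section Patterns

theorem path4_emb {V : Type*} {H : SimpleGraph V} {a b c d : V}
    (hab : H.Adj a b) (hbc : H.Adj b c) (hcd : H.Adj c d)
    (hac : ¬H.Adj a c) (hbd : ¬H.Adj b d) (had : ¬H.Adj a d)
    (nac : a ≠ c) (nbd : b ≠ d) (nad : a ≠ d) :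
    Nonempty (pathGraph 4 ↪g H) := by
  have nab := hab.ne
  have nbc := hbc.ne
  have ncd := hcd.ne
  refine ⟨⟨⟨![a,b,c,d], ?_⟩, ?_⟩⟩
  · intro x y
    fin_cases x <;> fin_cases y <;> simp_all <;> tauto
  · intro x y
    show H.Adj (![a,b,c,d] x) (![a,b,c,d] y) ↔ _
    fin_cases x <;> fin_cases y <;>
      simp [pathGraph_adj, hab, hbc, hcd, hac, hbd, had, hab.symm, hbc.symm, hcd.symm] <;>
      first
        | decide
        | exact iff_of_true (by first | exact hab | exact hbc | exact hcd | exact hab.symm | exact hbc.symm | exact hcd.symm) (by decide)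
        | exact iff_of_false (by first | exact hac | exact hbd | exact had | exact H.irrefl _ | exact fun h => hac h.symm | exact fun h => hbd h.symm | exact fun h => had h.symm) (by decide)
        | exact fun h => hac h.symm
        | exact fun h => hbd h.symm
        | exact fun h => had h.symm

theorem cycle4_emb {V : Type*} {H : SimpleGraph V} {a b c d : V}
    (hab : H.Adj a b) (hbc : H.Adj b c) (hcd : H.Adj c d) (hda : H.Adj d a)
    (hac : ¬H.Adj a c) (hbd : ¬H.Adj b d) (nac : a ≠ c) (nbd : b ≠ d) :
    Nonempty (cycleGraph 4 ↪g H) := by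
  have nab := hab.ne
  have nbc := hbc.ne
  have ncd := hcd.ne
  have nda := hda.ne
  refine ⟨⟨⟨![a,b,c,d], ?_⟩, ?_⟩⟩
  · intro x y
    fin_cases x <;> fin_cases y <;> simp_all <;> tauto
  · intro x y
    show H.Adj (![a,b,c,d] x) (![a,b,c,d] y) ↔ _
    fin_cases x <;> fin_cases y <;>
      rw [cycleGraph_adj] <;>
      simp [hab, hbc, hcd, hda, hac, hbd, hab.symm, hbc.symm, hcd.symm, hda.symm] <;>
      first
        | decide
        | exact iff_of_true (by first | exact hab | exact hbc | exact hcd | exact hda | exact hab.symm | exact hbc.symm | exact hcd.symm | exact hda.symm) (by decide)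
        | exact iff_of_false (by first | exact hac | exact hbd | exact H.irrefl _ | exact fun h => hac h.symm | exact fun h => hbd h.symm) (by decide)
        | exact fun h => hac h.symm
        | exact fun h => hbd h.symm

theorem twoK2_emb {V : Type*} {H : SimpleGraph V} {a b c d : V}
    (hab : H.Adj a b) (hcd : H.Adj c d)
    (hac : ¬H.Adj a c) (had : ¬H.Adj a d) (hbc : ¬H.Adj b c) (hbd : ¬H.Adj b d)
    (nac : a ≠ c) (nad : a ≠ d) (nbc : b ≠ c) (nbd : b ≠ d) :
    Nonempty (twoK2 ↪g H) := by
  have nab := hab.ne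
  have ncd := hcd.ne
  refine ⟨⟨⟨![a,b,c,d], ?_⟩, ?_⟩⟩
  · intro x y
    fin_cases x <;> fin_cases y <;> simp_all <;> tauto
  · intro x y
    show H.Adj (![a,b,c,d] x) (![a,b,c,d] y) ↔ _
    fin_cases x <;> fin_cases y <;>
      simp [twoK2, hab, hcd, hac, had, hbc, hbd, hab.symm, hcd.symm] <;>
      first
        | decide
        | exact iff_of_true (by first | exact hab | exact hcd | exact hab.symm | exact hcd.symm) (by decide)
        | exact iff_of_false (by first | exact hac | exact had | exact hbc | exact hbd | exact H.irrefl _ | exact fun h => hac h.symm | exact fun h => had h.symm | exact fun h => hbc h.symm | exact fun h => hbd h.symm) (by decide)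
        | exact fun h => hac h.symm
        | exact fun h => had h.symm
        | exact fun h => hbc h.symm
        | exact fun h => hbd h.symm

end Patterns

namespace TWObs

/-- The alphabet of letters used to encode a graph of threshold-width at most `k`. -/
abbrev Sig (k : ℕ) : Type := Prop × Set (Fin k)

/-- The decoder: in a vertex ordering, an earlier vertex with letter `a` is adjacent to a
later vertex with letter `b` iff `delta a b`. -/
def delta {k : ℕ} (a b : Sig k) : Prop := b.1 ∧ a.2 ∩ b.2 = ∅

theorem threshold_of_map {V₁ V₂ : Type*} {H₁ : SimpleGraph V₁} {H₂ : SimpleGraph V₂}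
    (f : V₁ → V₂) (hinj : Function.Injective f)
    (hadj : ∀ a b, H₁.Adj a b ↔ H₂.Adj (f a) (f b)) (h : IsThresholdGraph H₂) :
    IsThresholdGraph H₁ := by
  obtain ⟨h1, h2, h3⟩ := h
  refine ⟨⟨fun g => h1.false ?_⟩, ⟨fun g => h2.false ?_⟩, ⟨fun g => h3.false ?_⟩⟩ <;>
    exact ⟨⟨f ∘ g, hinj.comp g.injective⟩,
      fun {x y} => ((hadj (g x) (g y)).symm.trans g.map_rel_iff)⟩

theorem twa_of_map {V₁ V₂ : Type*} {G₁ : SimpleGraph V₁} {G₂ : SimpleGraph V₂} {k : ℕ}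
    (f : V₁ → V₂) (hinj : Function.Injective f)
    (hadj : ∀ a b, G₁.Adj a b ↔ G₂.Adj (f a) (f b)) (h : ThresholdWidthAtMost G₂ k) :
    ThresholdWidthAtMost G₁ k := by
  obtain ⟨N, H, hind, hT, hle, hextra⟩ := h
  refine ⟨fun i => f ⁻¹' (N i), H.comap f, ?_, ?_, ?_, ?_⟩
  · intro i a ha b hb hne hadj1
    exact hind i ha hb (fun hfe => hne (hinj hfe)) ((hadj a b).1 hadj1)
  · exact threshold_of_map f hinj (fun a b => Iff.rfl) hT
  · intro a b hG
    exact hle ((hadj a b).1 hG)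
  · intro a b hH hG
    obtain ⟨i, hi1, hi2⟩ := hextra (f a) (f b) hH (fun hG2 => hG ((hadj a b).2 hG2))
    exact ⟨i, hi1, hi2⟩

theorem twa_of_isEmpty {V : Type*} [IsEmpty V] (G : SimpleGraph V) (k : ℕ) :
    ThresholdWidthAtMost G k := by
  refine ⟨fun _ => ∅, G, fun i => Set.pairwise_empty _, ?_, le_refl _, fun x => isEmptyElim x⟩
  exact ⟨⟨fun g => isEmptyElim (g 0)⟩, ⟨fun g => isEmptyElim (g 0)⟩, ⟨fun g => isEmptyElim (g 0)⟩⟩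

theorem nbr_dichotomy {V : Type*} {H : SimpleGraph V} (hT : IsThresholdGraph H) {u v : V}
    (huv : ¬ H.Adj u v) :
    H.neighborSet u ⊆ H.neighborSet v ∨ H.neighborSet v ⊆ H.neighborSet u := by
  by_contra hcon
  push_neg at hcon
  obtain ⟨h1, h2⟩ := hcon
  obtain ⟨a, ha1, ha2⟩ := Set.not_subset.1 h1
  obtain ⟨b, hb1, hb2⟩ := Set.not_subset.1 h2
  simp only [mem_neighborSet] at ha1 ha2 hb1 hb2
  have hvb : H.Adj v b := hb1
  have nuv : u ≠ v := by
    rintro rfl; exact ha2 ha1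
  have nub : u ≠ b := by
    rintro rfl; exact huv hvb.symm
  have nav : a ≠ v := by
    rintro rfl; exact huv ha1
  have nab : a ≠ b := by
    rintro rfl; exact hb2 ha1
  by_cases hab : H.Adj a b
  · -- induced P4 : u - a - b - v
    exact hT.1.false (path4_emb ha1 hab hvb.symm hb2
      (fun h => ha2 h.symm) huv nub nav nuv).some
  · -- induced 2K2 : u - a , v - b
    exact hT.2.2.false (twoK2_emb ha1 hvb huv hb2
      (fun h => ha2 h.symm) hab nuv nub nav nab).some

theorem exists_universal_or_isolated {V : Type*} [Finite V] [Nonempty V] {H : SimpleGraph V}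
    (hT : IsThresholdGraph H) :
    ∃ v, (∀ u, u ≠ v → H.Adj u v) ∨ (∀ u, ¬ H.Adj u v) := by
  classical
  cases nonempty_fintype V
  have deg : V → ℕ := fun z => (H.neighborSet z).ncard
  obtain ⟨v, -, hv⟩ := Finset.exists_max_image Finset.univ
    (fun z => (H.neighborSet z).ncard) ⟨Classical.arbitrary V, Finset.mem_univ _⟩
  have hvmax : ∀ z, (H.neighborSet z).ncard ≤ (H.neighborSet v).ncard :=
    fun z => hv z (Finset.mem_univ z)
  by_cases huniv : ∀ u, u ≠ v → H.Adj u v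
  · exact ⟨v, Or.inl huniv⟩
  push_neg at huniv
  obtain ⟨u, hune, huv⟩ := huniv
  have huv' : ¬ H.Adj u v := huv
  by_cases hiso : ∀ w, ¬ H.Adj w u
  · exact ⟨u, Or.inr hiso⟩
  push_neg at hiso
  obtain ⟨w, hwu⟩ := hiso
  -- N(u) ⊆ N(v)
  have hNuv : H.neighborSet u ⊆ H.neighborSet v := by
    rcases nbr_dichotomy hT huv' with h | h
    · exact h
    · have : H.neighborSet v = H.neighborSet u :=
        Set.eq_of_subset_of_ncard_le h (hvmax u) (Set.toFinite _)
      rw [this]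
  have hwv : H.Adj v w := hNuv hwu.symm
  have nwv : w ≠ v := fun h => huv' (h ▸ hwu).symm
  -- every H-neighbor of v other than w is a neighbor of w
  have hN : H.neighborSet v ⊆ insert w (H.neighborSet w) := by
    intro y hy
    simp only [mem_neighborSet] at hy
    by_contra hyc
    simp only [Set.mem_insert_iff, mem_neighborSet] at hyc
    push_neg at hyc
    obtain ⟨hynw, hwy⟩ := hyc
    have hyu : y ≠ u := fun h => huv' (h ▸ hy).symm
    have hyv : y ≠ v := fun h => H.irrefl (h ▸ hy)
    by_cases huy : H.Adj u y
    · -- C4: u - y - v - w - u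
      exact hT.2.1.false (cycle4_emb huy hy.symm hwv hwu
        huv' (fun h => hwy h.symm) hune hynw).some
    · -- P4: u - w - v - y
      exact hT.1.false (path4_emb hwu.symm hwv.symm hy
        huv' hwy huy hune hynw.symm hyu.symm).some
  -- cardinality contradiction: deg w ≥ deg v + 1
  have hsub : (H.neighborSet v \ {w}) ∪ {u, v} ⊆ H.neighborSet w := by
    rintro z (⟨hz1, hz2⟩ | hz)
    · rcases hN hz1 with h | h
      · exact absurd (by simpa using h) (by simpa using hz2)
      · exact h
    · rcases hz with rfl | rfl
      · exact hwu
      · exact hwv.symm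
  have hdisj : Disjoint (H.neighborSet v \ {w}) ({u, v} : Set V) := by
    rw [Set.disjoint_right]
    rintro z (rfl | rfl)
    · exact fun hz => huv' hz.1.symm
    · exact fun hz => H.irrefl hz.1
  have hwmem : w ∈ H.neighborSet v := hwv
  have h1 : (H.neighborSet v \ {w}).ncard = (H.neighborSet v).ncard - 1 :=
    Set.ncard_diff_singleton_of_mem hwmem
  have h2 : ((H.neighborSet v \ {w}) ∪ {u, v}).ncard
      = (H.neighborSet v \ {w}).ncard + 2 := by
    rw [Set.ncard_union_eq hdisj (Set.toFinite _) (Set.toFinite _),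
      Set.ncard_pair hune]
  have h3 : ((H.neighborSet v \ {w}) ∪ {u, v}).ncard ≤ (H.neighborSet w).ncard :=
    Set.ncard_le_ncard hsub (Set.toFinite _)
  have h4 : 0 < (H.neighborSet v).ncard :=
    (Set.ncard_pos (Set.toFinite _)).2 ⟨w, hwmem⟩
  have h5 := hvmax w
  omega

theorem threshold_order : ∀ (n : ℕ) (V : Type) [Finite V], Nat.card V = n →
    ∀ H : SimpleGraph V, IsThresholdGraph H →
    ∃ (r : V → ℕ) (c : V → Prop), Function.Injective r ∧
      ∀ u w, r u < r w → (H.Adj u w ↔ c w) := by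
  intro n
  induction n using Nat.strong_induction_on with
  | _ n IH =>
    intro V _ hcard H hT
    classical
    cases isEmpty_or_nonempty V
    · exact ⟨fun _ => 0, fun _ => True, fun a => isEmptyElim a, fun u => isEmptyElim u⟩
    obtain ⟨v, hv⟩ := exists_universal_or_isolated hT
    obtain ⟨cv, hcv⟩ : ∃ cv : Prop, ∀ u, u ≠ v → (H.Adj u v ↔ cv) := by
      rcases hv with h | h
      · exact ⟨True, fun u hu => iff_of_true (h u hu) trivial⟩
      · exact ⟨False, fun u hu => iff_of_false (h u) not_false⟩
    haveI : Fintype V := Fintype.ofFinite V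
    have hlt : Nat.card {u : V // u ≠ v} < n := by
      rw [Nat.card_eq_fintype_card, ← hcard, Nat.card_eq_fintype_card]
      exact Fintype.card_subtype_lt (x := v) (by simp)
    obtain ⟨r', c', hinj', hprop'⟩ := IH _ hlt {u : V // u ≠ v} rfl
      (H.comap (Subtype.val)) (threshold_of_map _ Subtype.val_injective (fun a b => Iff.rfl) hT)
    set M : ℕ := Finset.univ.sup (fun z : {u : V // u ≠ v} => r' z) with hM
    have hle : ∀ z : {u : V // u ≠ v}, r' z ≤ M := fun z => Finset.le_sup (Finset.mem_univ z)
    refine ⟨fun u => if h : u = v then M + 1 else r' ⟨u, h⟩,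
      fun u => if h : u = v then cv else c' ⟨u, h⟩, ?_, ?_⟩
    · intro a b hab
      dsimp only at hab
      split_ifs at hab with h1 h2 h2
      · rw [h1, h2]
      · exact absurd hab.symm (Nat.ne_of_lt (Nat.lt_succ_of_le (hle _)))
      · exact absurd hab (Nat.ne_of_lt (Nat.lt_succ_of_le (hle _)))
      · exact congrArg Subtype.val (hinj' hab)
    · intro u w hlt2
      dsimp only at hlt2 ⊢
      by_cases hw : w = v
      · rw [dif_pos hw]
        have hu : u ≠ v := by
          rintro rfl
          rw [dif_pos rfl, dif_pos hw] at hlt2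
          exact lt_irrefl _ hlt2
        rw [hw]
        exact hcv u hu
      · rw [dif_neg hw]
        have hu : u ≠ v := by
          rintro rfl
          rw [dif_pos rfl, dif_neg hw] at hlt2
          have := hle ⟨w, hw⟩
          omega
        rw [dif_neg hu, dif_neg hw] at hlt2
        exact hprop' ⟨u, hu⟩ ⟨w, hw⟩ hlt2

theorem exists_word {V : Type} [Finite V] {G : SimpleGraph V} {k : ℕ}
    (h : ThresholdWidthAtMost G k) :
    ∃ (r : V → ℕ) (ℓ : V → Sig k), Function.Injective r ∧
      ∀ u w, r u < r w → (G.Adj u w ↔ delta (ℓ u) (ℓ w)) := by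
  obtain ⟨N, H, hind, hT, hle, hextra⟩ := h
  obtain ⟨r, c, hinj, hprop⟩ := threshold_order (Nat.card V) V rfl H hT
  refine ⟨r, fun v => (c v, {i | v ∈ N i}), hinj, ?_⟩
  intro u w hlt
  simp only [delta]
  have hne : u ≠ w := fun h => by subst h; exact lt_irrefl _ hlt
  constructor
  · intro hadj
    refine ⟨(hprop u w hlt).1 (hle hadj), ?_⟩
    ext i
    simp only [Set.mem_inter_iff, Set.mem_setOf_eq, Set.mem_empty_iff_false, iff_false, not_and]
    intro hu hw
    exact hind i hu hw hne hadj
  · rintro ⟨hcw, hdisj⟩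
    by_contra hnadj
    obtain ⟨i, hiu, hiw⟩ := hextra u w ((hprop u w hlt).2 hcw) hnadj
    have hmem : i ∈ ({i | u ∈ N i} ∩ {i | w ∈ N i} : Set (Fin k)) := ⟨hiu, hiw⟩
    rw [hdisj] at hmem
    exact hmem


theorem exists_word_list {m k : ℕ} {F : SimpleGraph (Fin m)} (x : Fin m)
    (h : ThresholdWidthAtMost (F.induce {x}ᶜ) k) :
    ∃ (vs : List (Fin m)) (ℓ : Fin m → Sig k), vs.Nodup ∧ (∀ y, y ∈ vs ↔ y ≠ x) ∧
      ∀ (i j : ℕ) (hi : i < vs.length) (hj : j < vs.length), i < j →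
        (F.Adj vs[i] vs[j] ↔ delta (ℓ vs[i]) (ℓ vs[j])) := by
  classical
  obtain ⟨r, ℓ', hinj, hprop⟩ := exists_word h
  have hmem' : ∀ y : Fin m, y ≠ x → y ∈ ({x}ᶜ : Set (Fin m)) := fun y hy => by simp [hy]
  set M : ℕ := Finset.univ.sup (fun z : ({x}ᶜ : Set (Fin m)) => r z) with hMdef
  have hleM : ∀ z, r z ≤ M := fun z => Finset.le_sup (Finset.mem_univ z)
  set rext : Fin m → ℕ := fun y => if h : y = x then M + 1 else r ⟨y, hmem' y h⟩ with hrext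
  have hrinj : Function.Injective rext := by
    intro a b hab
    dsimp only [rext] at hab
    split_ifs at hab with h1 h2 h2
    · rw [h1, h2]
    · exact absurd hab.symm (Nat.ne_of_lt (Nat.lt_succ_of_le (hleM _)))
    · exact absurd hab (Nat.ne_of_lt (Nat.lt_succ_of_le (hleM _)))
    · exact congrArg Subtype.val (hinj hab)
  set rel : Fin m → Fin m → Prop := fun a b => rext a ≤ rext b with hrel
  haveI : DecidableRel rel := fun a b => inferInstanceAs (Decidable (_ ≤ _))
  haveI : IsTrans (Fin m) rel := ⟨fun a b c hab hbc => le_trans hab hbc⟩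
  haveI : Std.Antisymm rel := ⟨fun a b hab hba => hrinj (le_antisymm hab hba)⟩
  haveI : Std.Total rel := ⟨fun a b => le_total _ _⟩
  set vs : List (Fin m) := Finset.sort (Finset.univ.erase x) rel with hvs
  have hnd : vs.Nodup := Finset.sort_nodup _ _
  have hsorted : List.Pairwise rel vs := Finset.pairwise_sort _ _
  have hmemvs : ∀ y, y ∈ vs ↔ y ≠ x := by
    intro y; rw [hvs, Finset.mem_sort, Finset.mem_erase]; simp
  refine ⟨vs, fun y => if h : y = x then (True, ∅) else ℓ' ⟨y, hmem' y h⟩, hnd, hmemvs, ?_⟩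
  intro i j hi hj hij
  have hine : vs[i] ≠ x := (hmemvs _).1 (List.getElem_mem _)
  have hjne : vs[j] ≠ x := (hmemvs _).1 (List.getElem_mem _)
  have hgne : vs[i] ≠ vs[j] := by
    intro he
    have h3 : vs.get ⟨i, hi⟩ = vs.get ⟨j, hj⟩ := by simp [List.get_eq_getElem, he]
    have h2 : i = j := congrArg Fin.val (hnd.get_inj_iff.1 h3)
    omega
  have hrle : rext vs[i] ≤ rext vs[j] := by
    have := hsorted.rel_get_of_lt (a := ⟨i, hi⟩) (b := ⟨j, hj⟩) (by simpa using hij)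
    simpa using this
  have hrlt : rext vs[i] < rext vs[j] := lt_of_le_of_ne hrle (fun he => hgne (hrinj he))
  rw [hrext] at hrlt
  simp only [dif_neg hine, dif_neg hjne] at hrlt
  have := hprop _ _ hrlt
  simp only [comap_adj] at this
  simp only [dif_neg hine, dif_neg hjne]
  exact (by simpa using this)


theorem emb_of_sublist {V₁ V₂ : Type} [DecidableEq V₁] {G₁ : SimpleGraph V₁}
    {G₂ : SimpleGraph V₂} {β : Type*} (δ : β → β → Prop)
    (x₁ : V₁) (vs₁ : List V₁) (ℓ₁ : V₁ → β) (nd₁ : vs₁.Nodup) (mem₁ : ∀ y, y ∈ vs₁ ↔ y ≠ x₁)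
    (w₁ : ∀ (i j : ℕ) (hi : i < vs₁.length) (hj : j < vs₁.length), i < j →
        (G₁.Adj vs₁[i] vs₁[j] ↔ δ (ℓ₁ vs₁[i]) (ℓ₁ vs₁[j])))
    (x₂ : V₂) (vs₂ : List V₂) (ℓ₂ : V₂ → β) (nd₂ : vs₂.Nodup) (mem₂ : ∀ y, y ∈ vs₂ ↔ y ≠ x₂)
    (w₂ : ∀ (i j : ℕ) (hi : i < vs₂.length) (hj : j < vs₂.length), i < j →
        (G₂.Adj vs₂[i] vs₂[j] ↔ δ (ℓ₂ vs₂[i]) (ℓ₂ vs₂[j])))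
    (hsub : List.Sublist (vs₁.map fun y => ((ℓ₁ y, G₁.Adj x₁ y) : β × Prop))
      (vs₂.map fun y => ((ℓ₂ y, G₂.Adj x₂ y) : β × Prop))) :
    ∃ ψ : V₁ → V₂, Function.Injective ψ ∧ ∀ a b, G₁.Adj a b ↔ G₂.Adj (ψ a) (ψ b) := by
  classical
  rw [List.sublist_iff_exists_orderEmbedding_getElem?_eq] at hsub
  obtain ⟨f, hf⟩ := hsub
  have key : ∀ a : V₁, a ≠ x₁ → ∃ z : V₂,
      vs₂[f (vs₁.idxOf a)]? = some z ∧
      ℓ₂ z = ℓ₁ a ∧ (G₂.Adj x₂ z = G₁.Adj x₁ a) := by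
    intro a ha
    have hamem : a ∈ vs₁ := (mem₁ a).2 ha
    have hidx : vs₁.idxOf a < vs₁.length := List.idxOf_lt_length_iff.2 hamem
    have h1 : (vs₁.map fun y => ((ℓ₁ y, G₁.Adj x₁ y) : β × Prop))[vs₁.idxOf a]?
        = some (ℓ₁ a, G₁.Adj x₁ a) := by
      rw [List.getElem?_map, List.getElem?_eq_getElem hidx, List.getElem_idxOf hidx]
      rfl
    have h2 := ((hf (vs₁.idxOf a)).symm.trans h1)
    rw [List.getElem?_map] at h2
    obtain ⟨z, hz1, hz2⟩ := Option.map_eq_some_iff.1 h2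
    exact ⟨z, hz1, congrArg Prod.fst hz2, congrArg Prod.snd hz2⟩
  set ψ : V₁ → V₂ := fun a => if h : a = x₁ then x₂ else Classical.choose (key a h) with hψ
  have spec : ∀ (a : V₁) (h : a ≠ x₁),
      vs₂[f (vs₁.idxOf a)]? = some (ψ a) ∧ ℓ₂ (ψ a) = ℓ₁ a ∧
      (G₂.Adj x₂ (ψ a) = G₁.Adj x₁ a) := by
    intro a h
    have hc := Classical.choose_spec (key a h)
    have he : ψ a = Classical.choose (key a h) := dif_neg h
    rw [he]
    exact hc
  have speclt : ∀ (a : V₁) (h : a ≠ x₁), f (vs₁.idxOf a) < vs₂.length ∧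
      ∀ (hb : f (vs₁.idxOf a) < vs₂.length), vs₂[f (vs₁.idxOf a)]'hb = ψ a := by
    intro a h
    obtain ⟨hg, -, -⟩ := spec a h
    obtain ⟨hb, hg'⟩ := List.getElem?_eq_some_iff.1 hg
    exact ⟨hb, fun _ => by simpa [List.get_eq_getElem] using hg'⟩
  have hne2 : ∀ (a : V₁) (h : a ≠ x₁), ψ a ≠ x₂ := by
    intro a h
    have := (spec a h).1
    exact (mem₂ _).1 (List.mem_of_getElem? this)
  have idx_inj : ∀ (a b : V₁) (ha : a ≠ x₁) (hb : b ≠ x₁),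
      vs₁.idxOf a = vs₁.idxOf b → a = b := by
    intro a b ha hb hieq
    have ha' : vs₁.idxOf a < vs₁.length := List.idxOf_lt_length_iff.2 ((mem₁ a).2 ha)
    have hb' : vs₁.idxOf b < vs₁.length := List.idxOf_lt_length_iff.2 ((mem₁ b).2 hb)
    have h3 : vs₁.get ⟨vs₁.idxOf a, ha'⟩ = vs₁.get ⟨vs₁.idxOf b, hb'⟩ := by
      congr 1
      exact Fin.ext hieq
    rwa [List.idxOf_get, List.idxOf_get] at h3
  have hinjψ : Function.Injective ψ := by
    intro a b hab
    by_cases ha : a = x₁ <;> by_cases hb : b = x₁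
    · rw [ha, hb]
    · exfalso
      apply hne2 b hb
      rw [← hab]; exact dif_pos ha
    · exfalso
      apply hne2 a ha
      rw [hab]; exact dif_pos hb
    · obtain ⟨hga, -, -⟩ := spec a ha
      obtain ⟨hgb, -, -⟩ := spec b hb
      rw [hab] at hga
      obtain ⟨hba, hga'⟩ := List.getElem?_eq_some_iff.1 hga
      obtain ⟨hbb, hgb'⟩ := List.getElem?_eq_some_iff.1 hgb
      have hgg : vs₂.get ⟨f (vs₁.idxOf a), hba⟩ = vs₂.get ⟨f (vs₁.idxOf b), hbb⟩ := by
        simp only [List.get_eq_getElem]; rw [hga', hgb']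
      have hfeq : f (vs₁.idxOf a) = f (vs₁.idxOf b) :=
        congrArg Fin.val (nd₂.get_inj_iff.1 hgg)
      exact idx_inj a b ha hb (f.injective hfeq)
  have key2 : ∀ (a b : V₁) (ha : a ≠ x₁) (hb : b ≠ x₁),
      vs₁.idxOf a < vs₁.idxOf b → (G₁.Adj a b ↔ G₂.Adj (ψ a) (ψ b)) := by
    intro a b ha hb hlt
    have ha' : vs₁.idxOf a < vs₁.length := List.idxOf_lt_length_iff.2 ((mem₁ a).2 ha)
    have hb' : vs₁.idxOf b < vs₁.length := List.idxOf_lt_length_iff.2 ((mem₁ b).2 hb)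
    have w1 := w₁ (vs₁.idxOf a) (vs₁.idxOf b) ha' hb' hlt
    have e1 : vs₁[vs₁.idxOf a]'ha' = a := by
      simpa [List.get_eq_getElem] using List.idxOf_get ha'
    have e2 : vs₁[vs₁.idxOf b]'hb' = b := by
      simpa [List.get_eq_getElem] using List.idxOf_get hb'
    rw [e1, e2] at w1
    obtain ⟨hba, hea⟩ := speclt a ha
    obtain ⟨hbb, heb⟩ := speclt b hb
    have hflt : f (vs₁.idxOf a) < f (vs₁.idxOf b) := f.strictMono hlt
    have w2 := w₂ (f (vs₁.idxOf a)) (f (vs₁.idxOf b)) hba hbb hflt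
    rw [hea hba, heb hbb, (spec a ha).2.1, (spec b hb).2.1] at w2
    exact w1.trans w2.symm
  refine ⟨ψ, hinjψ, ?_⟩
  intro a b
  by_cases hab : a = b
  · subst hab
    exact iff_of_false (G₁.irrefl) (G₂.irrefl)
  by_cases ha : a = x₁ <;> by_cases hb : b = x₁
  · exact absurd (ha.trans hb.symm) hab
  · rcases ha with rfl
    have hψa : ψ a = x₂ := dif_pos rfl
    obtain ⟨-, -, he⟩ := spec b hb
    rw [hψa]
    exact (iff_of_eq he).symm
  · rcases hb with rfl
    have hψb : ψ b = x₂ := dif_pos rfl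
    obtain ⟨-, -, he⟩ := spec a ha
    rw [hψb, G₁.adj_comm, G₂.adj_comm]
    exact (iff_of_eq he).symm
  · rcases lt_trichotomy (vs₁.idxOf a) (vs₁.idxOf b) with h | h | h
    · exact key2 a b ha hb h
    · exact absurd (idx_inj a b ha hb h) hab
    · rw [G₁.adj_comm, G₂.adj_comm]
      exact key2 b a hb ha h


/-- A minimal obstruction for threshold-width at most `k`. -/
def MinObs (k : ℕ) {m : ℕ} (F : SimpleGraph (Fin m)) : Prop :=
  ¬ ThresholdWidthAtMost F k ∧
    ∀ s : Set (Fin m), s ≠ Set.univ → ThresholdWidthAtMost (F.induce s) k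

theorem minobs_card_pos {k m : ℕ} {F : SimpleGraph (Fin m)} (h : MinObs k F) : 0 < m := by
  rcases Nat.eq_zero_or_pos m with rfl | h'
  · exact absurd (twa_of_isEmpty F k) h.1
  · exact h'

theorem obs_data {k m : ℕ} {F : SimpleGraph (Fin m)} (h : MinObs k F) (hm : 0 < m) :
    ∃ (vs : List (Fin m)) (ℓ : Fin m → Sig k), vs.Nodup ∧
      (∀ y, y ∈ vs ↔ y ≠ (⟨0, hm⟩ : Fin m)) ∧
      ∀ (i j : ℕ) (hi : i < vs.length) (hj : j < vs.length), i < j →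
        (F.Adj vs[i] vs[j] ↔ delta (ℓ vs[i]) (ℓ vs[j])) := by
  apply exists_word_list
  apply h.2
  intro hs
  have hx : (⟨0, hm⟩ : Fin m) ∈ ({(⟨0, hm⟩ : Fin m)}ᶜ : Set (Fin m)) := hs ▸ Set.mem_univ _
  simp at hx

theorem sizes_bounded (k : ℕ) : ∃ B : ℕ, ∀ m (F : SimpleGraph (Fin m)), MinObs k F → m ≤ B := by
  classical
  by_contra hcon
  push_neg at hcon
  have step : ∀ B : ℕ, ∃ p : Σ m : ℕ, SimpleGraph (Fin m), MinObs k p.2 ∧ B < p.1 := by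
    intro B
    obtain ⟨m, F, h1, h2⟩ := hcon B
    exact ⟨⟨m, F⟩, h1, h2⟩
  let g : ℕ → Σ m : ℕ, SimpleGraph (Fin m) := fun n => Nat.rec (Classical.choose (step 0))
      (fun _ p => Classical.choose (step p.1)) n
  have hg0 : MinObs k (g 0).2 := (Classical.choose_spec (step 0)).1
  have hgs : ∀ n, MinObs k (g (n+1)).2 ∧ (g n).1 < (g (n+1)).1 := fun n =>
    Classical.choose_spec (step (g n).1)
  have hobs : ∀ n, MinObs k (g n).2 := fun n => Nat.casesOn n hg0 (fun n => (hgs n).1)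
  have hmono : StrictMono fun n => (g n).1 := strictMono_nat_of_lt_succ (fun n => (hgs n).2)
  have hpos : ∀ n, 0 < (g n).1 := fun n => minobs_card_pos (hobs n)
  have hdata : ∀ n, ∃ (vs : List (Fin (g n).1)) (ℓ : Fin (g n).1 → Sig k),
      vs.Nodup ∧ (∀ y, y ∈ vs ↔ y ≠ (⟨0, hpos n⟩ : Fin (g n).1)) ∧
      ∀ (i j : ℕ) (hi : i < vs.length) (hj : j < vs.length), i < j →
        ((g n).2.Adj vs[i] vs[j] ↔ delta (ℓ vs[i]) (ℓ vs[j])) :=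
    fun n => obs_data (hobs n) (hpos n)
  choose vs ℓ hnd hmem hword using hdata
  haveI : IsRefl (Sig k × Prop) (· = ·) := ⟨fun a => rfl⟩
  haveI : IsTrans (Sig k × Prop) (· = ·) := ⟨fun a b c h1 h2 => h1.trans h2⟩
  have pwo : (Set.univ : Set (Sig k × Prop)).PartiallyWellOrderedOn (· = ·) := by
    rw [Set.partiallyWellOrderedOn_iff_exists_lt]
    intro seq _
    obtain ⟨i, j, hne, heq⟩ := Finite.exists_ne_map_eq_of_infinite seq
    rcases hne.lt_or_gt with h | h
    · exact ⟨i, j, h, heq⟩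
    · exact ⟨j, i, h, heq.symm⟩
  obtain ⟨s, t, hst, hsl⟩ :=
    (Set.PartiallyWellOrderedOn.partiallyWellOrderedOn_sublistForall₂ _ pwo).exists_lt
      (f := fun n => (vs n).map (fun y => ((ℓ n y, (g n).2.Adj ⟨0, hpos n⟩ y) : Sig k × Prop)))
      (fun n x hx => Set.mem_univ x)
  obtain ⟨l, hfl, hsub⟩ := List.sublistForall₂_iff.1 hsl
  rw [List.forall₂_eq_eq_eq] at hfl
  subst hfl
  obtain ⟨ψ, hinj, hadj⟩ := emb_of_sublist delta ⟨0, hpos s⟩ (vs s) (ℓ s) (hnd s) (hmem s)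
    (hword s) ⟨0, hpos t⟩ (vs t) (ℓ t) (hnd t) (hmem t) (hword t) hsub
  have hlt : (g s).1 < (g t).1 := hmono hst
  have hrange : Set.range ψ ≠ Set.univ := by
    intro h
    have h1 : (Set.range ψ).ncard = (g s).1 := by
      rw [← Set.image_univ, Set.ncard_image_of_injective _ hinj, Set.ncard_univ,
        Nat.card_eq_fintype_card, Fintype.card_fin]
    rw [h, Set.ncard_univ, Nat.card_eq_fintype_card, Fintype.card_fin] at h1
    omega
  have htwa := (hobs t).2 (Set.range ψ) hrange
  have htwas : ThresholdWidthAtMost (g s).2 k := by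
    apply twa_of_map (G₂ := (g t).2.induce (Set.range ψ))
      (f := fun a => ⟨ψ a, Set.mem_range_self a⟩) ?_ ?_ htwa
    · intro a b hab
      exact hinj (congrArg Subtype.val hab)
    · intro a b
      simpa using hadj a b
  exact (hobs s).1 htwas


theorem backward (k : ℕ) :
    ∀ (n : ℕ) (V : Type) [Fintype V], Fintype.card V = n → ∀ G : SimpleGraph V,
      (∀ (M : ℕ) (F : SimpleGraph (Fin M)), MinObs k F → IsEmpty (F ↪g G)) →
      ThresholdWidthAtMost G k := by
  intro n
  induction n using Nat.strong_induction_on with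
  | _ n IH =>
    intro V _ hcard G hemb
    classical
    by_cases hex : ∃ s : Set V, s ≠ Set.univ ∧ ¬ ThresholdWidthAtMost (G.induce s) k
    · obtain ⟨s, hs, hns⟩ := hex
      exfalso
      apply hns
      haveI : Fintype ↥s := Fintype.ofFinite _
      have hlt : Fintype.card ↥s < n := by
        have h1 : s.ncard < (Set.univ : Set V).ncard :=
          Set.ncard_lt_ncard ((Set.ssubset_univ_iff).2 hs) (Set.toFinite _)
        rw [Set.ncard_univ, Nat.card_eq_fintype_card, hcard] at h1
        rw [← Nat.card_coe_set_eq, Nat.card_eq_fintype_card] at h1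
        exact h1
      apply IH (Fintype.card ↥s) hlt ↥s rfl (G.induce s)
      intro M F hF
      exact ⟨fun emb => (hemb M F hF).false ((SimpleGraph.Embedding.induce s).comp emb)⟩
    · push_neg at hex
      by_contra hnt
      have e : V ≃ Fin n := Fintype.equivFinOfCardEq hcard
      set G₀ : SimpleGraph (Fin n) := G.comap (e.symm : Fin n → V) with hG0
      have hmo : MinObs k G₀ := by
        constructor
        · intro h
          apply hnt
          apply twa_of_map (f := (e : V → Fin n)) e.injective ?_ h
          intro a b
          simp [hG0, comap_adj]
        · intro s hs
          have hsne : (e.symm '' s) ≠ Set.univ := by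
            intro h
            obtain ⟨x, hx⟩ : ∃ x, x ∉ s := by
              by_contra hall
              push_neg at hall
              exact hs (Set.eq_univ_iff_forall.2 hall)
            apply hx
            have hmem : e.symm x ∈ e.symm '' s := h ▸ Set.mem_univ _
            obtain ⟨y, hy, hyx⟩ := hmem
            rwa [← e.symm.injective hyx]
          have htwa := hex (e.symm '' s) hsne
          apply twa_of_map
            (f := fun a : ↥s => (⟨e.symm a, Set.mem_image_of_mem _ a.2⟩ : ↥(e.symm '' s)))
            ?_ ?_ htwa
          · intro a b hab
            exact Subtype.ext (e.symm.injective (congrArg Subtype.val hab))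
          · intro a b
            simp [hG0, comap_adj]
      exact (hemb n G₀ hmo).false ⟨e.symm.toEmbedding, fun {a b} => Iff.rfl⟩

end TWObs

/-- For every `k` there is a finite family of finite graphs such that a finite graph has
threshold-width at most `k` iff it has no induced subgraph isomorphic to a member of
the family. -/
theorem thresholdWidth_finitely_many_obstructions (k : ℕ) :
    ∃ (ι : Type) (_ : Finite ι) (n : ι → ℕ) (F : ∀ i : ι, SimpleGraph (Fin (n i))),
      ∀ (V : Type) (_ : Fintype V) (G : SimpleGraph V),
        ThresholdWidthAtMost G k ↔ ∀ i : ι, IsEmpty (F i ↪g G) := by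
  classical
  obtain ⟨B, hB⟩ := TWObs.sizes_bounded k
  refine ⟨{p : Σ m : ℕ, SimpleGraph (Fin m) // TWObs.MinObs k p.2}, ?_, fun i => i.1.1,
    fun i => i.1.2, ?_⟩
  · haveI : ∀ m : ℕ, Finite (SimpleGraph (Fin m)) := fun m =>
      Finite.of_injective (fun G => G.Adj) (fun a b h => SimpleGraph.ext h)
    apply Finite.of_injective (β := Σ m : Fin (B+1), SimpleGraph (Fin m.1))
      (fun i => ⟨⟨i.1.1, Nat.lt_succ_of_le (hB i.1.1 i.1.2 i.2)⟩, i.1.2⟩)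
    intro i j hij
    apply Subtype.ext
    have h1 := congrArg
      (fun p : Σ m : Fin (B+1), SimpleGraph (Fin m.1) => (⟨p.1.1, p.2⟩ : Σ m : ℕ, SimpleGraph (Fin m))) hij
    exact h1
  · intro V _ G
    constructor
    · intro h i
      exact ⟨fun emb => i.2.1 (TWObs.twa_of_map emb emb.injective
        (fun a b => emb.map_rel_iff.symm) h)⟩
    · intro h
      apply TWObs.backward k (Fintype.card V) V rfl G
      intro M F hF
      exact h ⟨⟨M, F⟩, hF⟩
end

section
/- A finite simple graph G on n vertices is a threshold graph if and only if there is an ordering v_1,…,v_n of its vertices such that for every j ∈ {1,…,n}, the vertex v_j is either isolated or universal in the subgraph of G induced by {v_1,…,v_j}. -/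
open SimpleGraph

lemma twoK2_adj : ∀ u v : Fin 4, twoK2.Adj u v ↔ ((u=0∧v=1)∨(u=1∧v=0)∨(u=2∧v=3)∨(u=3∧v=2)) := by
  intro u v
  rw [twoK2, fromEdgeSet_adj]
  simp only [Set.mem_insert_iff, Set.mem_singleton_iff, Sym2.eq, Sym2.rel_iff',
    Prod.mk.injEq, Prod.swap_prod_mk]
  fin_cases u <;> fin_cases v <;> decide

instance : DecidableRel twoK2.Adj := fun u v => decidable_of_iff' _ (twoK2_adj u v)

instance {n : ℕ} : DecidableRel (pathGraph n).Adj :=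
  fun u v => decidable_of_iff' _ pathGraph_adj

def embed4 {V : Type*} {G : SimpleGraph V} (F : SimpleGraph (Fin 4))
    (f : Fin 4 → V) (hinj : Function.Injective f)
    (h : ∀ a b : Fin 4, F.Adj a b → G.Adj (f a) (f b))
    (h' : ∀ a b : Fin 4, a ≠ b → ¬ F.Adj a b → ¬ G.Adj (f a) (f b)) : F ↪g G where
  toFun := f
  inj' := hinj
  map_rel_iff' := by
    intro a b
    constructor
    · intro hab
      by_contra hne
      exact h' a b (fun he => G.irrefl (he ▸ hab)) hne hab
    · exact h a b

lemma forbid {V : Type*} {G : SimpleGraph V} (hT : IsThresholdGraph G)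
    {u w x y : V} (hux : G.Adj u x) (hwx : ¬ G.Adj w x) (hxw : x ≠ w)
    (hwy : G.Adj w y) (huy : ¬ G.Adj u y) (hyu : y ≠ u) : False := by
  have huw : u ≠ w := fun h => hwx (h ▸ hux)
  have hux' : u ≠ x := hux.ne
  have hwy' : w ≠ y := hwy.ne
  have hxy : x ≠ y := fun h => huy (h ▸ hux)
  by_cases h1 : G.Adj u w <;> by_cases h2 : G.Adj x y
  · -- C4: u-x-y-w-u
    refine hT.2.1.false (embed4 _ ![u, x, y, w] ?_ ?_ ?_)
    · intro a b hab
      fin_cases a <;> fin_cases b <;> simp_all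
    · intro a b hab
      fin_cases a <;> fin_cases b <;>
        first
          | exact absurd hab (by decide)
          | exact hux | exact hux.symm | exact hwy | exact hwy.symm
          | exact h1 | exact h1.symm | exact h2 | exact h2.symm
    · intro a b hne hab
      fin_cases a <;> fin_cases b <;>
        first
          | exact absurd (by decide) hab
          | exact absurd rfl hne
          | exact huy | exact fun h => huy h.symm
          | exact hwx | exact fun h => hwx h.symm
          | exact h1 | exact fun h => h1 h.symm
          | exact h2 | exact fun h => h2 h.symm
  · -- P4: x-u-w-y
    refine hT.1.false (embed4 _ ![x, u, w, y] ?_ ?_ ?_)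
    · intro a b hab
      fin_cases a <;> fin_cases b <;> simp_all
    · intro a b hab
      fin_cases a <;> fin_cases b <;>
        first
          | exact absurd hab (by decide)
          | exact hux | exact hux.symm | exact hwy | exact hwy.symm
          | exact h1 | exact h1.symm | exact h2 | exact h2.symm
    · intro a b hne hab
      fin_cases a <;> fin_cases b <;>
        first
          | exact absurd (by decide) hab
          | exact absurd rfl hne
          | exact huy | exact fun h => huy h.symm
          | exact hwx | exact fun h => hwx h.symm
          | exact h1 | exact fun h => h1 h.symm
          | exact h2 | exact fun h => h2 h.symm
  · -- P4: u-x-y-w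
    refine hT.1.false (embed4 _ ![u, x, y, w] ?_ ?_ ?_)
    · intro a b hab
      fin_cases a <;> fin_cases b <;> simp_all
    · intro a b hab
      fin_cases a <;> fin_cases b <;>
        first
          | exact absurd hab (by decide)
          | exact hux | exact hux.symm | exact hwy | exact hwy.symm
          | exact h1 | exact h1.symm | exact h2 | exact h2.symm
    · intro a b hne hab
      fin_cases a <;> fin_cases b <;>
        first
          | exact absurd (by decide) hab
          | exact absurd rfl hne
          | exact huy | exact fun h => huy h.symm
          | exact hwx | exact fun h => hwx h.symm
          | exact h1 | exact fun h => h1 h.symm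
          | exact h2 | exact fun h => h2 h.symm
  · -- 2K2: ux, wy
    refine hT.2.2.false (embed4 _ ![u, x, w, y] ?_ ?_ ?_)
    · intro a b hab
      fin_cases a <;> fin_cases b <;> simp_all
    · intro a b hab
      fin_cases a <;> fin_cases b <;>
        first
          | exact absurd hab (by decide)
          | exact hux | exact hux.symm | exact hwy | exact hwy.symm
          | exact h1 | exact h1.symm | exact h2 | exact h2.symm
    · intro a b hne hab
      fin_cases a <;> fin_cases b <;>
        first
          | exact absurd (by decide) hab
          | exact absurd rfl hne
          | exact huy | exact fun h => huy h.symm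
          | exact hwx | exact fun h => hwx h.symm
          | exact h1 | exact fun h => h1 h.symm
          | exact h2 | exact fun h => h2 h.symm

lemma exists_iso_or_univ [Fintype V] [Nonempty V] {G : SimpleGraph V}
    [DecidableRel G.Adj] (hT : IsThresholdGraph G) :
    ∃ v : V, (∀ w, ¬ G.Adj v w) ∨ (∀ w, w ≠ v → G.Adj v w) := by
  classical
  by_cases hiso : ∃ v : V, ∀ w, ¬ G.Adj v w
  · obtain ⟨v, hv⟩ := hiso; exact ⟨v, Or.inl hv⟩
  push_neg at hiso
  obtain ⟨u, -, hu⟩ := Finset.exists_max_image Finset.univ (fun v => G.degree v)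
    ⟨Classical.arbitrary V, Finset.mem_univ _⟩
  refine ⟨u, Or.inr fun z hz => ?_⟩
  by_contra huz
  obtain ⟨w, hw⟩ := hiso z
  have hw_u : w ≠ u := fun h => huz (h ▸ hw).symm
  have key : ∀ x, G.Adj u x → x ≠ w → G.Adj w x := by
    intro x hx hxw
    by_contra hwx
    exact forbid hT hx hwx hxw hw.symm huz hz
  have hsub : (G.neighborFinset u).erase w ⊆ (G.neighborFinset w).erase u := by
    intro x hx
    rw [Finset.mem_erase, mem_neighborFinset] at hx ⊢
    exact ⟨fun h => G.irrefl (h ▸ hx.2), key x hx.2 hx.1⟩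
  have hz1 : z ∈ (G.neighborFinset w).erase u := by
    rw [Finset.mem_erase, mem_neighborFinset]; exact ⟨hz, hw.symm⟩
  have hz2 : z ∉ (G.neighborFinset u).erase w := by
    rw [Finset.mem_erase, mem_neighborFinset]; exact fun h => huz h.2
  have hlt : ((G.neighborFinset u).erase w).card < ((G.neighborFinset w).erase u).card :=
    Finset.card_lt_card ⟨hsub, fun h => hz2 (h hz1)⟩
  have hdeg : G.degree w ≤ G.degree u := hu w (Finset.mem_univ w)
  by_cases huw : G.Adj u w
  · have h1 : w ∈ G.neighborFinset u := by rwa [mem_neighborFinset]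
    have h2 : u ∈ G.neighborFinset w := by rw [mem_neighborFinset]; exact huw.symm
    rw [Finset.card_erase_of_mem h1, Finset.card_erase_of_mem h2] at hlt
    have hd1 : 1 ≤ (G.neighborFinset u).card := Finset.card_pos.mpr ⟨w, h1⟩
    rw [← card_neighborFinset_eq_degree, ← card_neighborFinset_eq_degree] at hdeg
    omega
  · have h1 : w ∉ G.neighborFinset u := by rwa [mem_neighborFinset]
    have h2 : u ∉ G.neighborFinset w := by
      rw [mem_neighborFinset]; exact fun h => huw h.symm
    rw [Finset.erase_eq_of_notMem h1, Finset.erase_eq_of_notMem h2] at hlt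
    rw [← card_neighborFinset_eq_degree, ← card_neighborFinset_eq_degree] at hdeg
    omega

lemma threshold_of_embedding {V W : Type*} {G : SimpleGraph V} {G' : SimpleGraph W}
    (emb : G' ↪g G) (hT : IsThresholdGraph G) : IsThresholdGraph G' :=
  ⟨⟨fun f => hT.1.false (emb.comp f)⟩, ⟨fun f => hT.2.1.false (emb.comp f)⟩,
    ⟨fun f => hT.2.2.false (emb.comp f)⟩⟩

universe u

lemma forward (n : ℕ) : ∀ {V : Type u} [Fintype V] (G : SimpleGraph V), Fintype.card V = n →
    IsThresholdGraph G →
    ∃ e : Fin n ≃ V, ∀ j : Fin n,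
      (∀ i < j, ¬ G.Adj (e j) (e i)) ∨ (∀ i < j, G.Adj (e j) (e i)) := by
  induction n with
  | zero =>
    intro V _ G h _
    exact ⟨(Fintype.equivFinOfCardEq h).symm, fun j => j.elim0⟩
  | succ m ih =>
    intro V _ G hcard hT
    classical
    haveI hne : Nonempty V := by
      rw [← Fintype.card_pos_iff, hcard]; omega
    obtain ⟨v, hv⟩ := exists_iso_or_univ (G := G) hT
    let S := {w : V // w ≠ v}
    let G' : SimpleGraph S := SimpleGraph.comap (Subtype.val) G
    have hcard' : Fintype.card S = m := by
      have h2 : Fintype.card {w : V // ¬ w = v} =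
          Fintype.card V - Fintype.card {w : V // w = v} :=
        Fintype.card_subtype_compl _
      rw [Fintype.card_subtype_eq] at h2
      have h3 : Fintype.card S = Fintype.card {w : V // ¬ w = v} :=
        Fintype.card_congr (Equiv.subtypeEquivRight (by simp))
      rw [h3, h2, hcard]
      omega
    have hT' : IsThresholdGraph G' :=
      threshold_of_embedding (G := G) ⟨⟨Subtype.val, Subtype.val_injective⟩, Iff.rfl⟩ hT
    obtain ⟨e', he'⟩ := ih G' hcard' hT'
    let e : Fin (m+1) ≃ V :=
      { toFun := fun j => if h : j = Fin.last m then v else (e' (j.castPred h)).val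
        invFun := fun w => if h : w = v then Fin.last m else (e'.symm ⟨w, h⟩).castSucc
        left_inv := by
          intro j
          by_cases h : j = Fin.last m
          · subst h; simp
          · simp only [dif_neg h]
            rw [dif_neg (e' (j.castPred h)).2]
            have : (⟨(e' (j.castPred h)).val, (e' (j.castPred h)).2⟩ : S) = e' (j.castPred h) :=
              Subtype.ext rfl
            rw [this, Equiv.symm_apply_apply, Fin.castSucc_castPred]
        right_inv := by
          intro w
          by_cases h : w = v
          · subst h; simp
          · simp only [dif_neg h]
            rw [dif_neg (Fin.ne_last_of_lt (Fin.castSucc_lt_last _)),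
              Fin.castPred_castSucc, Equiv.apply_symm_apply] }
    have heval : ∀ (j : Fin (m+1)) (h : j ≠ Fin.last m), e j = (e' (j.castPred h)).val := by
      intro j h; simp only [e, Equiv.coe_fn_mk, dif_neg h]
    have hlast : e (Fin.last m) = v := by simp [e]
    refine ⟨e, fun j => ?_⟩
    by_cases hj : j = Fin.last m
    · subst hj
      rcases hv with hv | hv
      · left; intro i _; rw [hlast]; exact hv (e i)
      · right; intro i hi
        have hi' : i ≠ Fin.last m := Fin.ne_last_of_lt hi
        rw [hlast, heval i hi']
        exact hv _ (e' (i.castPred hi')).2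
    · rcases he' (j.castPred hj) with hc | hc
      · left; intro i hi
        have hi' : i ≠ Fin.last m := Fin.ne_last_of_lt (lt_of_lt_of_le hi (Fin.le_last j))
        have hij : i.castPred hi' < j.castPred hj := by
          rw [← Fin.castSucc_lt_castSucc_iff, Fin.castSucc_castPred, Fin.castSucc_castPred]
          exact hi
        have := hc _ hij
        rw [heval j hj, heval i hi']
        exact fun hadj => this hadj
      · right; intro i hi
        have hi' : i ≠ Fin.last m := Fin.ne_last_of_lt (lt_of_lt_of_le hi (Fin.le_last j))
        have hij : i.castPred hi' < j.castPred hj := by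
          rw [← Fin.castSucc_lt_castSucc_iff, Fin.castSucc_castPred, Fin.castSucc_castPred]
          exact hi
        have := hc _ hij
        rw [heval j hj, heval i hi']
        exact this

lemma backward_helper {V : Type u} [Fintype V] {G : SimpleGraph V}
    (e : Fin (Fintype.card V) ≃ V)
    (he : ∀ j, (∀ i < j, ¬ G.Adj (e j) (e i)) ∨ (∀ i < j, G.Adj (e j) (e i)))
    (F : SimpleGraph (Fin 4))
    (h1 : ∀ a, ∃ b, F.Adj a b) (h2 : ∀ a, ∃ b, b ≠ a ∧ ¬ F.Adj a b) :
    IsEmpty (F ↪g G) := by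
  constructor; intro f
  obtain ⟨a, -, ha⟩ := Finset.exists_max_image Finset.univ
    (fun a : Fin 4 => e.symm (f a)) ⟨0, Finset.mem_univ _⟩
  have hlt : ∀ b, b ≠ a → e.symm (f b) < e.symm (f a) := fun b hb =>
    lt_of_le_of_ne (ha b (Finset.mem_univ b))
      (fun h => hb (f.injective (e.symm.injective h)))
  rcases he (e.symm (f a)) with hc | hc
  · obtain ⟨b, hb⟩ := h1 a
    have hba : b ≠ a := fun h => F.irrefl (h ▸ hb)
    refine hc _ (hlt b hba) ?_
    rw [Equiv.apply_symm_apply, Equiv.apply_symm_apply]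
    exact f.map_rel_iff.mpr hb
  · obtain ⟨b, hba, hb⟩ := h2 a
    have := hc _ (hlt b hba)
    rw [Equiv.apply_symm_apply, Equiv.apply_symm_apply] at this
    exact hb (f.map_rel_iff.mp this)

/-- A finite graph is threshold iff there is an ordering of its vertices in which each
vertex is isolated or universal in the subgraph induced by it and its predecessors. -/
theorem isThresholdGraph_iff_elimination_ordering {V : Type*} [Fintype V]
    (G : SimpleGraph V) :
    IsThresholdGraph G ↔
      ∃ e : Fin (Fintype.card V) ≃ V,
        ∀ j : Fin (Fintype.card V),
          (∀ i < j, ¬ G.Adj (e j) (e i)) ∨ (∀ i < j, G.Adj (e j) (e i)) := by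
  constructor
  · intro hT
    exact forward (Fintype.card V) G rfl hT
  · rintro ⟨e, he⟩
    refine ⟨backward_helper e he _ ?_ ?_, backward_helper e he _ ?_ ?_,
      backward_helper e he _ ?_ ?_⟩ <;> decide
end

section
/- Let G be a finite simple graph, let A and B be disjoint sets of vertices of G, and let N_1,…,N_k be independent sets of G such that for every a ∈ A and b ∈ B with a not adjacent to b there exists i with both a ∈ N_i and b ∈ N_i. Then the A × B submatrix of the adjacency matrix of G, regarded as a matrix over the two-element field GF(2), has rank at most 2^k. -/
open SimpleGraph

/-- If all nonadjacencies between disjoint vertex sets `A` and `B` are covered by `k`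
independent sets, then the `A × B` submatrix of the adjacency matrix has rank at most
`2 ^ k` over `GF(2)`. -/
theorem rank_submatrix_le_two_pow {V : Type*} [Fintype V] [DecidableEq V]
    (G : SimpleGraph V) [DecidableRel G.Adj] (A B : Finset V) (hAB : Disjoint A B)
    (k : ℕ) (N : Fin k → Set V) (hindep : ∀ i, _root_.IsIndepSet G (N i))
    (hcover : ∀ a ∈ A, ∀ b ∈ B, ¬ G.Adj a b → ∃ i, a ∈ N i ∧ b ∈ N i) :
    Matrix.rank
      (Matrix.of fun (a : A) (b : B) => if G.Adj a b then (1 : ZMod 2) else 0)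
      ≤ 2 ^ k := by
  classical
  set χ : Fin k → V → ZMod 2 := fun i v => if v ∈ N i then 1 else 0 with hχ
  set U : Matrix A (Finset (Fin k)) (ZMod 2) :=
    Matrix.of fun a t => ∏ i ∈ t, χ i (a : V) with hU
  set W : Matrix (Finset (Fin k)) B (ZMod 2) :=
    Matrix.of fun t b => ∏ i ∈ t, χ i (b : V) with hW
  have key : (Matrix.of fun (a : A) (b : B) =>
      if G.Adj a b then (1 : ZMod 2) else 0) = U * W := by
    ext a b
    have hab : (a : V) ≠ (b : V) :=
      fun h => (Finset.disjoint_left.mp hAB) a.2 (h ▸ b.2)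
    have hprod : (if G.Adj a b then (1 : ZMod 2) else 0) =
        ∏ i : Fin k, (χ i (a : V) * χ i (b : V) + 1) := by
      by_cases h : G.Adj (a : V) (b : V)
      · rw [if_pos h]
        refine (Finset.prod_eq_one fun i _ => ?_).symm
        have : ¬ ((a : V) ∈ N i ∧ (b : V) ∈ N i) := by
          rintro ⟨ha, hb⟩
          exact (hindep i ha hb hab) h
        rcases Classical.em ((a : V) ∈ N i) with ha | ha
        · have hb : (b : V) ∉ N i := fun hb => this ⟨ha, hb⟩
          simp [hχ, ha, hb]
        · simp [hχ, ha]
      · rw [if_neg h]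
        obtain ⟨i, hai, hbi⟩ := hcover a a.2 b b.2 h
        refine (Finset.prod_eq_zero (Finset.mem_univ i) ?_).symm
        simp [hχ, hai, hbi]
        decide
    simp only [Matrix.of_apply, Matrix.mul_apply, hU, hW]
    rw [hprod, Finset.prod_add]
    rw [Finset.sum_congr rfl fun t _ => by
      rw [Finset.prod_const_one, mul_one, Finset.prod_mul_distrib]]
    rw [← Finset.sum_coe_sort (Finset.univ.powerset)]
    refine Finset.sum_nbij' (fun t => (t : Finset (Fin k))) (fun t => ⟨t, by simp⟩)
      ?_ ?_ ?_ ?_ ?_ <;> simp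
  rw [key]
  calc Matrix.rank (U * W) ≤ Matrix.rank U := Matrix.rank_mul_le_left U W
    _ ≤ Fintype.card (Finset (Fin k)) := Matrix.rank_le_card_width U
    _ = 2 ^ k := by simp [Fintype.card_finset]
end

section
/- Let x be an isolated vertex of a finite simple graph G. Then G has threshold-width at most k if and only if the graph G − x obtained by deleting x has threshold-width at most k. -/
open SimpleGraph

lemma pull_map_emb {W V P : Type*} (f : W ↪ V) (H : SimpleGraph W) (K : SimpleGraph P)
    (hK : ∀ p, ∃ q, K.Adj p q) (e : K ↪g H.map f) : Nonempty (K ↪g H) := by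
  have hrange : ∀ p, ∃ w, f w = e p := by
    intro p
    obtain ⟨q, hq⟩ := hK p
    obtain ⟨_, a, b, _, ha, hb⟩ := (e.map_rel_iff.mpr hq)
    exact ⟨a, ha⟩
  choose g hg using hrange
  refine ⟨⟨⟨g, ?_⟩, ?_⟩⟩
  · intro p q h
    apply e.injective
    rw [← hg p, ← hg q, h]
  · intro p q
    constructor
    · intro h
      have : (H.map f).Adj (e p) (e q) := by
        rw [← hg p, ← hg q]
        exact ⟨fun heq => h.ne (f.injective heq), g p, g q, h, rfl, rfl⟩
      exact e.map_rel_iff.mp this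
    · intro h
      obtain ⟨_, a, b, hab, ha, hb⟩ := e.map_rel_iff.mpr h
      rw [← hg p] at ha
      rw [← hg q] at hb
      rwa [f.injective ha, f.injective hb] at hab

lemma pattern_no_isolated_path : ∀ p : Fin 4, ∃ q, (SimpleGraph.pathGraph 4).Adj p q := by
  intro p
  fin_cases p
  · exact ⟨1, by rw [SimpleGraph.pathGraph_adj]; decide⟩
  · exact ⟨0, by rw [SimpleGraph.pathGraph_adj]; decide⟩
  · exact ⟨1, by rw [SimpleGraph.pathGraph_adj]; decide⟩
  · exact ⟨2, by rw [SimpleGraph.pathGraph_adj]; decide⟩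

lemma pattern_no_isolated_cycle : ∀ p : Fin 4, ∃ q, (SimpleGraph.cycleGraph 4).Adj p q := by
  intro p
  exact ⟨p + 1, by rw [SimpleGraph.cycleGraph_adj']; right; simp⟩

lemma pattern_no_isolated_twoK2 : ∀ p : Fin 4, ∃ q, twoK2.Adj p q := by
  intro p
  fin_cases p
  · exact ⟨1, by simp [twoK2]⟩
  · exact ⟨0, by simp [twoK2]⟩
  · exact ⟨3, by simp [twoK2]⟩
  · exact ⟨2, by simp [twoK2]⟩

/-- Deleting an isolated vertex does not change whether the threshold-width is at most `k`. -/
theorem thresholdWidthAtMost_delete_isolated {V : Type*} [Fintype V] [DecidableEq V]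
    (G : SimpleGraph V) (x : V) (hx : ∀ y, ¬ G.Adj x y) (k : ℕ) :
    ThresholdWidthAtMost G k ↔ ThresholdWidthAtMost (G.induce {x}ᶜ) k := by
  constructor
  · rintro ⟨N, H, hN, ⟨h1, h2, h3⟩, hle, hcov⟩
    refine ⟨fun i => Subtype.val ⁻¹' N i, H.induce {x}ᶜ, ?_, ⟨?_, ?_, ?_⟩, ?_, ?_⟩
    · intro i u hu v hv huv
      exact hN i hu hv (fun h => huv (Subtype.ext h))
    · exact ⟨fun e => h1.elim (e.trans (SimpleGraph.Embedding.induce _))⟩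
    · exact ⟨fun e => h2.elim (e.trans (SimpleGraph.Embedding.induce _))⟩
    · exact ⟨fun e => h3.elim (e.trans (SimpleGraph.Embedding.induce _))⟩
    · intro u v h
      exact hle h
    · intro u v h hG
      exact hcov u v h hG
  · rintro ⟨N, H, hN, ⟨h1, h2, h3⟩, hle, hcov⟩
    refine ⟨fun i => Subtype.val '' N i, H.map (Function.Embedding.subtype _),
      ?_, ⟨?_, ?_, ?_⟩, ?_, ?_⟩
    · rintro i _ ⟨u, hu, rfl⟩ _ ⟨v, hv, rfl⟩ huv
      have : u ≠ v := fun h => huv (by rw [h])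
      exact hN i hu hv this
    · exact ⟨fun e => h1.elim (pull_map_emb _ _ _ pattern_no_isolated_path e).some⟩
    · exact ⟨fun e => h2.elim (pull_map_emb _ _ _ pattern_no_isolated_cycle e).some⟩
    · exact ⟨fun e => h3.elim (pull_map_emb _ _ _ pattern_no_isolated_twoK2 e).some⟩
    · intro u v h
      have hu : u ≠ x := fun he => hx v (he ▸ h)
      have hv : v ≠ x := fun he => hx u (he ▸ h.symm)
      exact ⟨h.ne, ⟨u, hu⟩, ⟨v, hv⟩, hle h, rfl, rfl⟩
    · intro u v h hG
      obtain ⟨_, a, b, hab, ha, hb⟩ := h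
      subst ha; subst hb
      obtain ⟨i, hia, hib⟩ := hcov a b hab (fun h' => hG h')
      exact ⟨i, ⟨a, hia, rfl⟩, ⟨b, hib, rfl⟩⟩
end

section
/- Let G be a finite simple graph on n ≥ 1 vertices and let G′ be the graph obtained from G by adding a set C of n² new vertices forming a clique, each adjacent to every vertex of G, together with one further new vertex ω adjacent to exactly the vertices of G (so ω is adjacent to no vertex of C). Then the threshold-width of G′ equals the 𝔗-width of G. -/
open SimpleGraph

/-- The threshold-width of `G`: the least `k` such that `G` has threshold-width at
most `k`. -/
noncomputable def thresholdWidth {V : Type*} (G : SimpleGraph V) : ℕ :=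
  sInf {k | ThresholdWidthAtMost G k}

/-- `G` has 𝔗-width at most `k`: there are `k` independent sets covering every
nonadjacent pair of distinct vertices. -/
def TWidthAtMost {V : Type*} (G : SimpleGraph V) (k : ℕ) : Prop :=
  ∃ N : Fin k → Set V, (∀ i, _root_.IsIndepSet G (N i)) ∧
    ∀ x y : V, x ≠ y → ¬ G.Adj x y → ∃ i, x ∈ N i ∧ y ∈ N i

/-- The 𝔗-width of `G`. -/
noncomputable def tWidth {V : Type*} (G : SimpleGraph V) : ℕ :=
  sInf {k | TWidthAtMost G k}

/-- The graph `G'` obtained from `G` (on `n` vertices) by adding a clique `C` of `n ^ 2`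
new vertices, all adjacent to all of `G`, and one further vertex `ω` adjacent exactly to
the vertices of `G`. -/
def auxGraph {V : Type*} [Fintype V] (G : SimpleGraph V) :
    SimpleGraph (V ⊕ (Fin (Fintype.card V ^ 2) ⊕ Unit)) :=
  SimpleGraph.fromRel fun a b =>
    match a, b with
    | Sum.inl u, Sum.inl v => G.Adj u v
    | Sum.inl _, Sum.inr _ => True
    | Sum.inr (Sum.inl _), Sum.inr (Sum.inl _) => True
    | _, _ => False

/-! ### Auxiliary lemmas -/

/-- A graph in which every non-edge contains a fixed vertex `ω` is a threshold graph. -/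
lemma isThresholdGraph_of_omega {W : Type*} (H : SimpleGraph W) (ω : W)
    (h : ∀ x y : W, x ≠ y → ¬H.Adj x y → x = ω ∨ y = ω) : IsThresholdGraph H := by
  have key : ∀ (F : SimpleGraph (Fin 4)), ¬ F.Adj 0 2 → ¬ F.Adj 1 3 → IsEmpty (F ↪g H) := by
    intro F h02 h13
    constructor
    intro f
    have n02 : ¬ H.Adj (f 0) (f 2) := fun hh => h02 (f.map_adj_iff.mp hh)
    have n13 : ¬ H.Adj (f 1) (f 3) := fun hh => h13 (f.map_adj_iff.mp hh)
    have d02 : f 0 ≠ f 2 := fun e => absurd (f.injective e) (by decide)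
    have d13 : f 1 ≠ f 3 := fun e => absurd (f.injective e) (by decide)
    rcases h _ _ d02 n02 with h1 | h1 <;> rcases h _ _ d13 n13 with h2 | h2 <;>
      exact absurd (f.injective (h1.trans h2.symm)) (by decide)
  refine ⟨key _ ?_ ?_, key _ (by decide) (by decide), key _ ?_ ?_⟩
  · simp [pathGraph_adj]
  · simp [pathGraph_adj]
  · simp [twoK2, Sym2.eq, Sym2.rel_iff']
  · simp [twoK2, Sym2.eq, Sym2.rel_iff']

/-- Any graph has 𝔗-width at most `k` whenever `k` is at least the square of the number
of vertices. -/
lemma tWidthAtMost_of_sq_le {V : Type*} [Fintype V] (G : SimpleGraph V) {k : ℕ}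
    (hk : Fintype.card V ^ 2 ≤ k) : TWidthAtMost G k := by
  obtain ⟨e⟩ : Nonempty (V × V ↪ Fin k) := by
    apply Function.Embedding.nonempty_of_card_le
    simpa [Fintype.card_prod, sq] using hk
  refine ⟨fun i => {x | ∃ p : V × V, e p = i ∧ ¬G.Adj p.1 p.2 ∧ (x = p.1 ∨ x = p.2)},
    ?_, ?_⟩
  · intro i x hx y hy hxy
    obtain ⟨p, hp, hpn, hxp⟩ := hx
    obtain ⟨q, hq, hqn, hyq⟩ := hy
    have hpq : p = q := e.injective (hp.trans hq.symm)
    subst hpq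
    rcases hxp with rfl | rfl <;> rcases hyq with rfl | rfl
    · exact absurd rfl hxy
    · exact hpn
    · exact fun h => hpn h.symm
    · exact absurd rfl hxy
  · intro x y hxy hnadj
    exact ⟨e (x, y), ⟨(x, y), rfl, hnadj, Or.inl rfl⟩, ⟨(x, y), rfl, hnadj, Or.inr rfl⟩⟩

lemma cycle4_embedding {W : Type*} (H : SimpleGraph W) (a b c d : W)
    (hab : H.Adj a b) (hbc : H.Adj b c) (hcd : H.Adj c d) (hda : H.Adj d a)
    (hac : ¬H.Adj a c) (hbd : ¬H.Adj b d)
    (hac' : a ≠ c) (hbd' : b ≠ d) : Nonempty (SimpleGraph.cycleGraph 4 ↪g H) := by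
  have h1 := hab.ne
  have h2 := hbc.ne
  have h3 := hcd.ne
  have h4 := hda.ne.symm
  refine ⟨⟨⟨![a, b, c, d], ?_⟩, ?_⟩⟩
  · intro i j hij
    fin_cases i <;> fin_cases j <;> simp_all
  · intro i j
    have hca : ¬H.Adj c a := fun h => hac h.symm
    have hdb : ¬H.Adj d b := fun h => hbd h.symm
    change H.Adj (![a, b, c, d] i) (![a, b, c, d] j) ↔ (SimpleGraph.cycleGraph 4).Adj i j
    fin_cases i <;> fin_cases j <;>
      simp_all [SimpleGraph.cycleGraph, H.irrefl, hab.symm, hbc.symm, hcd.symm, hda.symm] <;>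
        decide

section AuxGraph

variable {V : Type*} [Fintype V] (G : SimpleGraph V)

local notation "W" => V ⊕ (Fin (Fintype.card V ^ 2) ⊕ Unit)

lemma auxGraph_adj_inl_inl (u v : V) :
    (auxGraph G).Adj (Sum.inl u) (Sum.inl v) ↔ G.Adj u v := by
  constructor
  · rintro ⟨hne, h | h⟩
    · exact h
    · exact h.symm
  · intro h
    exact ⟨by simpa using G.ne_of_adj h, Or.inl h⟩

lemma auxGraph_adj_inl_inr (u : V) (x : Fin (Fintype.card V ^ 2) ⊕ Unit) :
    (auxGraph G).Adj (Sum.inl u) (Sum.inr x) :=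
  ⟨by simp, Or.inl trivial⟩

lemma auxGraph_adj_cc {c c' : Fin (Fintype.card V ^ 2)} (h : c ≠ c') :
    (auxGraph G).Adj (Sum.inr (Sum.inl c)) (Sum.inr (Sum.inl c')) :=
  ⟨by simpa using h, Or.inl trivial⟩

lemma auxGraph_not_adj_omega (c : Fin (Fintype.card V ^ 2)) :
    ¬ (auxGraph G).Adj (Sum.inr (Sum.inr ())) (Sum.inr (Sum.inl c)) := by
  rintro ⟨hne, h | h⟩ <;> exact h

/-- The threshold graph used for the upper bound: everything adjacent except `ω` to the
clique `C`. -/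
def fullAux (_G : SimpleGraph V) : SimpleGraph (V ⊕ (Fin (Fintype.card V ^ 2) ⊕ Unit)) :=
  SimpleGraph.fromRel fun a b =>
    match a, b with
    | Sum.inl _, _ => True
    | Sum.inr (Sum.inl _), Sum.inr (Sum.inl _) => True
    | _, _ => False

lemma fullAux_omega (x y : W) (hxy : x ≠ y) (h : ¬ (fullAux G).Adj x y) :
    x = Sum.inr (Sum.inr ()) ∨ y = Sum.inr (Sum.inr ()) := by
  rcases x with u | c | u'
  · rcases y with v | c' | v'
    · exact absurd ⟨hxy, Or.inl trivial⟩ h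
    · exact absurd ⟨hxy, Or.inl trivial⟩ h
    · right; rfl
  · rcases y with v | c' | v'
    · exact absurd ⟨hxy, Or.inr trivial⟩ h
    · exact absurd ⟨hxy, Or.inl trivial⟩ h
    · right; rfl
  · left; cases u'; rfl

lemma auxGraph_le_fullAux : auxGraph G ≤ fullAux G := by
  rintro x y ⟨hxy, h⟩
  refine ⟨hxy, ?_⟩
  rcases x with u | c | u' <;> rcases y with v | c' | v' <;>
    simp_all <;> exact Or.inl trivial

lemma fullAux_new_edges {x y : W} (h : (fullAux G).Adj x y) (hn : ¬ (auxGraph G).Adj x y) :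
    ∃ u v : V, x = Sum.inl u ∧ y = Sum.inl v ∧ u ≠ v ∧ ¬ G.Adj u v := by
  obtain ⟨hxy, hr⟩ := h
  rcases x with u | c | u' <;> rcases y with v | c' | v'
  · refine ⟨u, v, rfl, rfl, by simpa using hxy, fun hadj => hn ?_⟩
    exact (auxGraph_adj_inl_inl G u v).mpr hadj
  · exact absurd (auxGraph_adj_inl_inr G u _) hn
  · exact absurd (auxGraph_adj_inl_inr G u _) hn
  · exact absurd ((auxGraph_adj_inl_inr G v _).symm) hn
  · exact absurd (auxGraph_adj_cc G (by simpa using hxy)) hn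
  · rcases hr with hf | hf <;> exact hf.elim
  · exact absurd ((auxGraph_adj_inl_inr G v _).symm) hn
  · rcases hr with hf | hf <;> exact hf.elim
  · cases u'; cases v'; exact absurd rfl hxy

end AuxGraph

/-- The threshold-width of the augmented graph `G'` equals the 𝔗-width of `G`. -/
theorem thresholdWidth_auxGraph {V : Type*} [Fintype V] (G : SimpleGraph V)
    (hV : 1 ≤ Fintype.card V) :
    thresholdWidth (auxGraph G) = tWidth G := by
  have hset : {k | ThresholdWidthAtMost (auxGraph G) k} = {k | TWidthAtMost G k} := by
    ext k
    simp only [Set.mem_setOf_eq]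
    constructor
    · rintro ⟨N, H, hN, hT, hle, hcov⟩
      by_cases hk : Fintype.card V ^ 2 ≤ k
      · exact tWidthAtMost_of_sq_le G hk
      push_neg at hk
      set ω : V ⊕ (Fin (Fintype.card V ^ 2) ⊕ Unit) := Sum.inr (Sum.inr ()) with hω
      -- there is a clique vertex not adjacent to ω in H
      have hc : ∃ c : Fin (Fintype.card V ^ 2), ¬ H.Adj ω (Sum.inr (Sum.inl c)) := by
        by_contra hall
        push_neg at hall
        have f : ∀ c : Fin (Fintype.card V ^ 2), ∃ i : Fin k,
            ω ∈ N i ∧ Sum.inr (Sum.inl c) ∈ N i := fun c =>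
          hcov _ _ (hall c) (auxGraph_not_adj_omega G c)
        choose g hg1 hg2 using f
        have hginj : Function.Injective g := by
          intro c c' hcc
          by_contra hne
          have := (hN (g c)) (hg2 c) (by rw [hcc]; exact hg2 c') (by simp [hne])
          exact this (auxGraph_adj_cc G hne)
        have := Fintype.card_le_of_injective g hginj
        simp at this
        omega
      obtain ⟨c₀, hc₀⟩ := hc
      -- every nonadjacent pair of G is adjacent in H
      have hAdjAll : ∀ u v : V, u ≠ v → ¬ G.Adj u v → H.Adj (Sum.inl u) (Sum.inl v) := by
        intro u v huv hnuv
        by_contra hH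
        have a1 : H.Adj (Sum.inl u) ω := hle (auxGraph_adj_inl_inr G u _)
        have a2 : H.Adj ω (Sum.inl v) := (hle (auxGraph_adj_inl_inr G v _)).symm
        have a3 : H.Adj (Sum.inl v) (Sum.inr (Sum.inl c₀)) := hle (auxGraph_adj_inl_inr G v _)
        have a4 : H.Adj (Sum.inr (Sum.inl c₀)) (Sum.inl u) :=
          (hle (auxGraph_adj_inl_inr G u _)).symm
        obtain ⟨e⟩ := cycle4_embedding H (Sum.inl u) ω (Sum.inl v) (Sum.inr (Sum.inl c₀))
          a1 a2 a3 a4 hH hc₀ (by simpa using huv) (by simp [hω])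
        exact hT.2.1.false e
      refine ⟨fun i => Sum.inl ⁻¹' N i, ?_, ?_⟩
      · intro i x hx y hy hxy
        intro hadj
        exact (hN i) hx hy (by simpa using hxy) ((auxGraph_adj_inl_inl G x y).mpr hadj)
      · intro u v huv hnuv
        have hH := hAdjAll u v huv hnuv
        have hnG : ¬ (auxGraph G).Adj (Sum.inl u) (Sum.inl v) := fun h =>
          hnuv ((auxGraph_adj_inl_inl G u v).mp h)
        obtain ⟨i, hi1, hi2⟩ := hcov _ _ hH hnG
        exact ⟨i, hi1, hi2⟩
    · rintro ⟨N, hN, hcov⟩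
      refine ⟨fun i => Sum.inl '' N i, fullAux G, ?_, ?_, auxGraph_le_fullAux G, ?_⟩
      · rintro i x ⟨u, hu, rfl⟩ y ⟨v, hv, rfl⟩ hxy hadj
        have huv : u ≠ v := fun h => hxy (by rw [h])
        exact (hN i) hu hv huv ((auxGraph_adj_inl_inl G u v).mp hadj)
      · exact isThresholdGraph_of_omega _ (Sum.inr (Sum.inr ())) (fullAux_omega G)
      · intro x y hH hnG
        obtain ⟨u, v, rfl, rfl, huv, hnuv⟩ := fullAux_new_edges G hH hnG
        obtain ⟨i, hi1, hi2⟩ := hcov u v huv hnuv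
        exact ⟨i, ⟨u, hi1, rfl⟩, ⟨v, hi2, rfl⟩⟩
  unfold thresholdWidth tWidth
  rw [hset]
end

section
/- Every finite simple graph of threshold-width at most k has a well-linked witness with k independent sets: if G has threshold-width at most k, then there exist independent sets N_1,…,N_k of G and a threshold graph H on the same vertex set with E(G) ⊆ E(H), such that every edge of H not in G has both endpoints in some common N_i, and moreover for every i ∈ {1,…,k}, every vertex x ∉ N_i has a neighbor in N_i. -/
open SimpleGraph

/-- Every independent set extends to a maximal (hence dominating) independent set. -/
theorem extend_indep {V : Type*} (G : SimpleGraph V) (s : Set V)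
    (hs : _root_.IsIndepSet G s) :
    ∃ t, s ⊆ t ∧ _root_.IsIndepSet G t ∧ ∀ x ∉ t, ∃ y ∈ t, G.Adj x y := by
  obtain ⟨m, hsm, hm⟩ := zorn_subset_nonempty {t | _root_.IsIndepSet G t}
    (fun c hc hchain _ => by
      refine ⟨⋃₀ c, ?_, fun t ht => Set.subset_sUnion_of_mem ht⟩
      intro u hu v hv huv
      obtain ⟨t1, ht1, hu1⟩ := hu
      obtain ⟨t2, ht2, hv2⟩ := hv
      rcases hchain.total ht1 ht2 with h12 | h21
      · exact hc ht2 (h12 hu1) hv2 huv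
      · exact hc ht1 hu1 (h21 hv2) huv) s hs
  refine ⟨m, hsm, hm.prop, fun x hx => ?_⟩
  by_contra hno
  push_neg at hno
  have hins : _root_.IsIndepSet G (insert x m) := by
    intro u hu v hv huv
    rcases hu with rfl | hu <;> rcases hv with rfl | hv
    · exact absurd rfl huv
    · exact fun hadj => hno v hv hadj
    · exact fun hadj => hno u hu hadj.symm
    · exact hm.prop hu hv huv
  exact hx (hm.mem_of_prop_insert hins)

/-- Every graph of threshold-width at most `k` has a well-linked witness with `k`
independent sets. -/
theorem exists_wellLinked_witness {V : Type*} [Fintype V] (G : SimpleGraph V) (k : ℕ)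
    (h : ThresholdWidthAtMost G k) :
    ∃ (N : Fin k → Set V) (H : SimpleGraph V),
      (∀ i, _root_.IsIndepSet G (N i)) ∧ IsThresholdGraph H ∧ G ≤ H ∧
        (∀ x y, H.Adj x y → ¬ G.Adj x y → ∃ i, x ∈ N i ∧ y ∈ N i) ∧
        ∀ (i : Fin k) (x : V), x ∉ N i → ∃ y ∈ N i, G.Adj x y := by
  obtain ⟨N, H, hindep, hthr, hle, hwit⟩ := h
  choose M hM1 hM2 hM3 using fun i => extend_indep G (N i) (hindep i)
  exact ⟨M, H, hM2, hthr, hle,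
    fun x y hxy hnxy => (hwit x y hxy hnxy).imp fun i ⟨hx, hy⟩ => ⟨hM1 i hx, hM1 i hy⟩,
    hM3⟩
end

section
/- Let G be a finite simple graph with independent sets N_1,…,N_k such that every pair of distinct nonadjacent vertices of G lies together in some N_i (a k-probe clique), and assume the collection is well-linked. Then for all distinct vertices x and y: N(x) ⊆ N(y) if and only if {i : y ∈ N_i} is a nonempty subset of {i : x ∈ N_i}. -/
open SimpleGraph

/-- In a `k`-probe clique with a well-linked witness, `N(x) ⊆ N(y)` iff the label of `y`
is a nonempty subset of the label of `x`. -/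
theorem probeClique_neighborSet_subset_iff {V : Type*} [Fintype V] (G : SimpleGraph V)
    (k : ℕ) (N : Fin k → Set V) (hindep : ∀ i, _root_.IsIndepSet G (N i))
    (hclique : ∀ x y : V, x ≠ y → ¬ G.Adj x y → ∃ i, x ∈ N i ∧ y ∈ N i)
    (hwl : ∀ (i : Fin k) (x : V), x ∉ N i → ∃ y ∈ N i, G.Adj x y)
    (x y : V) (hxy : x ≠ y) :
    G.neighborSet x ⊆ G.neighborSet y ↔
      {i | y ∈ N i}.Nonempty ∧ {i | y ∈ N i} ⊆ {i | x ∈ N i} := by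
  constructor
  · intro hsub
    have hnadj : ¬ G.Adj x y := by
      intro h
      exact G.irrefl (hsub (show y ∈ G.neighborSet x from h))
    obtain ⟨i, hxi, hyi⟩ := hclique x y hxy hnadj
    refine ⟨⟨i, hyi⟩, ?_⟩
    intro j hyj
    by_contra hxj
    obtain ⟨z, hzj, hadj⟩ := hwl j x hxj
    have hyz : G.Adj y z := hsub hadj
    rcases eq_or_ne y z with rfl | hne
    · exact G.irrefl hyz
    · exact hindep j hyj hzj hne hyz
  · rintro ⟨⟨i, hyi⟩, hsub⟩
    have hxi : x ∈ N i := hsub hyi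
    have hnadj : ¬ G.Adj x y := hindep i hxi hyi hxy
    intro z hz
    have hxz : G.Adj x z := hz
    have hzy : z ≠ y := by rintro rfl; exact hnadj hxz
    by_contra hnyz
    have : ¬ G.Adj z y := fun h => hnyz h.symm
    obtain ⟨j, hzj, hyj⟩ := hclique z y hzy this
    exact hindep j (hsub hyj) hzj (fun h => G.irrefl (h ▸ hxz)) hxz
end

section
/- Let G be a finite simple graph, let N_1,…,N_k be a well-linked collection of independent sets of G, and let H be a threshold graph on the same vertex set with E(G) ⊆ E(H) such that every edge of H not in G has both endpoints in some common N_i. Then for every pair of vertices x and y that are nonadjacent in G and satisfy N_H(x) ⊆ N_H[y]: N_G(x) ⊆ N_G(y) if and only if {i : y ∈ N_i} ⊆ {i : x ∈ N_i}. -/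
open SimpleGraph

/-- Let `H` be a threshold embedding of `(G, N)` with a well-linked witness. For every
pair `x, y` nonadjacent in `G` with `N_H(x) ⊆ N_H[y]`, one has `N_G(x) ⊆ N_G(y)` iff
the label of `y` is contained in the label of `x`. -/
theorem nonadj_neighborSet_subset_iff_label {V : Type*} [Fintype V]
    (G H : SimpleGraph V) (k : ℕ) (N : Fin k → Set V)
    (hindep : ∀ i, _root_.IsIndepSet G (N i))
    (hwl : ∀ (i : Fin k) (x : V), x ∉ N i → ∃ y ∈ N i, G.Adj x y)
    (hH : IsThresholdGraph H) (hle : G ≤ H)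
    (hcov : ∀ x y, H.Adj x y → ¬ G.Adj x y → ∃ i, x ∈ N i ∧ y ∈ N i)
    (x y : V) (hxy : ¬ G.Adj x y)
    (hsub : H.neighborSet x ⊆ insert y (H.neighborSet y)) :
    G.neighborSet x ⊆ G.neighborSet y ↔ {i | y ∈ N i} ⊆ {i | x ∈ N i} := by
  constructor
  · intro hnb i hy
    by_contra hx
    obtain ⟨z, hzN, hxz⟩ := hwl i x hx
    have hz : z ∈ G.neighborSet x := hxz
    have hyz : G.Adj y z := hnb hz
    exact hindep i hy hzN hyz.ne hyz
  · intro hlab z hz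
    have hxz : G.Adj x z := hz
    have hzH : z ∈ insert y (H.neighborSet y) := hsub (hle hxz)
    rcases hzH with rfl | hzH
    · exact absurd hxz hxy
    · have hHyz : H.Adj y z := hzH
      by_contra hGyz
      obtain ⟨i, hyi, hzi⟩ := hcov y z hHyz hGyz
      exact hindep i (hlab hyi) hzi hxz.ne hxz
end

section
/- Let G be a finite simple graph of threshold-width at most k that contains no k-probe module. Then G has at most 2^{k+1} + k maximal vertices, where a vertex x is maximal if there is no vertex y with N(x) ⊆ N(y) and N(y) ≠ N(x), and there is no vertex y with N[x] ⊆ N[y] and N[y] ≠ N[x]. -/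
open SimpleGraph

lemma no_p4 {V : Type*} {H : SimpleGraph V} (hT : IsEmpty (SimpleGraph.pathGraph 4 ↪g H))
    {v0 v1 v2 v3 : V}
    (d02 : v0 ≠ v2) (d03 : v0 ≠ v3) (d13 : v1 ≠ v3)
    (h01 : H.Adj v0 v1) (h12 : H.Adj v1 v2) (h23 : H.Adj v2 v3)
    (h02 : ¬ H.Adj v0 v2) (h03 : ¬ H.Adj v0 v3) (h13 : ¬ H.Adj v1 v3) : False := by
  have d01 := h01.ne; have d12 := h12.ne; have d23 := h23.ne
  have h10 := h01.symm; have h21 := h12.symm; have h32 := h23.symm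
  have h20 : ¬ H.Adj v2 v0 := fun h => h02 h.symm
  have h30 : ¬ H.Adj v3 v0 := fun h => h03 h.symm
  have h31 : ¬ H.Adj v3 v1 := fun h => h13 h.symm
  refine hT.elim ⟨⟨![v0,v1,v2,v3], ?_⟩, ?_⟩
  · intro i j hij
    fin_cases i <;> fin_cases j <;> simp_all
  · intro i j
    change H.Adj (![v0,v1,v2,v3] i) (![v0,v1,v2,v3] j) ↔ _
    fin_cases i <;> fin_cases j <;>
      simp [Function.Embedding.coeFn_mk, pathGraph_adj, h01, h12, h23, h10, h21, h32, h02, h03, h13, h20, h30, h31] <;>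
      decide

lemma no_c4 {V : Type*} {H : SimpleGraph V} (hT : IsEmpty (SimpleGraph.cycleGraph 4 ↪g H))
    {v0 v1 v2 v3 : V}
    (d02 : v0 ≠ v2) (d13 : v1 ≠ v3)
    (h01 : H.Adj v0 v1) (h12 : H.Adj v1 v2) (h23 : H.Adj v2 v3) (h30 : H.Adj v3 v0)
    (h02 : ¬ H.Adj v0 v2) (h13 : ¬ H.Adj v1 v3) : False := by
  have d01 := h01.ne; have d12 := h12.ne; have d23 := h23.ne; have d30 := h30.ne
  have h10 := h01.symm; have h21 := h12.symm; have h32 := h23.symm; have h03 := h30.symm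
  have h20 : ¬ H.Adj v2 v0 := fun h => h02 h.symm
  have h31 : ¬ H.Adj v3 v1 := fun h => h13 h.symm
  refine hT.elim ⟨⟨![v0,v1,v2,v3], ?_⟩, ?_⟩
  · intro i j hij
    fin_cases i <;> fin_cases j <;> simp_all
  · intro i j
    change H.Adj (![v0,v1,v2,v3] i) (![v0,v1,v2,v3] j) ↔ _
    fin_cases i <;> fin_cases j <;>
      simp [Function.Embedding.coeFn_mk, cycleGraph_adj, h01, h12, h23, h30, h10, h21, h32, h03, h02, h13, h20, h31] <;>
      decide

lemma no_2k2 {V : Type*} {H : SimpleGraph V} (hT : IsEmpty (twoK2 ↪g H))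
    {v0 v1 v2 v3 : V}
    (d02 : v0 ≠ v2) (d03 : v0 ≠ v3) (d12 : v1 ≠ v2) (d13 : v1 ≠ v3)
    (h01 : H.Adj v0 v1) (h23 : H.Adj v2 v3)
    (h02 : ¬ H.Adj v0 v2) (h03 : ¬ H.Adj v0 v3) (h12 : ¬ H.Adj v1 v2)
    (h13 : ¬ H.Adj v1 v3) : False := by
  have d01 := h01.ne; have d23 := h23.ne
  have h10 := h01.symm; have h32 := h23.symm
  have h20 : ¬ H.Adj v2 v0 := fun h => h02 h.symm
  have h30 : ¬ H.Adj v3 v0 := fun h => h03 h.symm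
  have h21 : ¬ H.Adj v2 v1 := fun h => h12 h.symm
  have h31 : ¬ H.Adj v3 v1 := fun h => h13 h.symm
  refine hT.elim ⟨⟨![v0,v1,v2,v3], ?_⟩, ?_⟩
  · intro i j hij
    fin_cases i <;> fin_cases j <;> simp_all
  · intro i j
    change H.Adj (![v0,v1,v2,v3] i) (![v0,v1,v2,v3] j) ↔ _
    fin_cases i <;> fin_cases j <;>
      simp [Function.Embedding.coeFn_mk, twoK2, h01, h23, h10, h32, h02, h03, h12, h13, h20, h30, h21, h31, Sym2.eq,
        Sym2.rel_iff', Fin.ext_iff] <;>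
      decide
open SimpleGraph

lemma threshold_total {V : Type*} {H : SimpleGraph V} (hT : IsThresholdGraph H) (x y : V) :
    (H.neighborSet x \ {y} ⊆ H.neighborSet y \ {x}) ∨
      (H.neighborSet y \ {x} ⊆ H.neighborSet x \ {y}) := by
  by_contra hc
  push_neg at hc
  obtain ⟨h1, h2⟩ := hc
  rw [Set.not_subset] at h1 h2
  obtain ⟨a, ha, ha'⟩ := h1
  obtain ⟨b, hb, hb'⟩ := h2
  obtain ⟨hxa, hay⟩ := ha
  obtain ⟨hyb, hbx⟩ := hb
  rw [Set.mem_singleton_iff] at hay hbx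
  rw [SimpleGraph.mem_neighborSet] at hxa hyb
  have hax : a ≠ x := fun h => H.irrefl (h ▸ hxa)
  have hby : b ≠ y := fun h => H.irrefl (h ▸ hyb)
  have hya : ¬ H.Adj y a := by
    intro h
    exact ha' ⟨SimpleGraph.mem_neighborSet _ _ _ |>.2 h, hax⟩
  have hxb : ¬ H.Adj x b := by
    intro h
    exact hb' ⟨SimpleGraph.mem_neighborSet _ _ _ |>.2 h, hby⟩
  have hxy : x ≠ y := fun h => hya (by rw [h] at hxa; exact hxa)
  have hab : a ≠ b := fun h => hya (by rw [h]; exact hyb)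
  have hay' : ¬ H.Adj a y := fun h => hya h.symm
  have hbx' : b ≠ x := hbx
  have hxb' : x ≠ b := Ne.symm hbx'
  by_cases hXY : H.Adj x y <;> by_cases hAB : H.Adj a b
  · -- C4 : x - a - b - y - x
    exact no_c4 hT.2.1 hxb' hay hxa hAB hyb.symm hXY.symm hxb hay'
  · -- P4 : a - x - y - b
    exact no_p4 hT.1 hay hab hxb' hxa.symm hXY hyb hay' hAB hxb
  · -- P4 : x - a - b - y
    exact no_p4 hT.1 hxb' hxy hay hxa hAB hyb.symm hxb hXY hay'
  · -- 2K2 : (x,a) and (y,b)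
    exact no_2k2 hT.2.2 hxy hxb' hay hab hxa hyb hXY hxb hay' hAB

/-- A `k`-probe module: a false module with at least `3` vertices or a true module with
at least `k + 3` vertices. -/
def IsKProbeModule {V : Type*} (G : SimpleGraph V) (k : ℕ) (S : Set V) : Prop :=
  (S.Pairwise (fun u v => G.neighborSet u = G.neighborSet v) ∧ 3 ≤ S.ncard) ∨
  (S.Pairwise (fun u v => insert u (G.neighborSet u) = insert v (G.neighborSet v)) ∧
    k + 3 ≤ S.ncard)

/-- A vertex is maximal if its open (resp. closed) neighborhood is not strictly contained
in the open (resp. closed) neighborhood of any other vertex. -/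
def IsMaximalVertex {V : Type*} (G : SimpleGraph V) (x : V) : Prop :=
  (¬ ∃ y : V, G.neighborSet x ⊆ G.neighborSet y ∧ G.neighborSet y ≠ G.neighborSet x) ∧
  (¬ ∃ y : V, insert x (G.neighborSet x) ⊆ insert y (G.neighborSet y) ∧
      insert y (G.neighborSet y) ≠ insert x (G.neighborSet x))

/-- A graph of threshold-width at most `k` without `k`-probe modules has at most
`2 ^ (k + 1) + k` maximal vertices. -/
theorem card_maximalVertices_le {V : Type*} [Fintype V] (G : SimpleGraph V) (k : ℕ)
    (h : ThresholdWidthAtMost G k) (hmod : ¬ ∃ S : Set V, IsKProbeModule G k S) :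
    {x : V | IsMaximalVertex G x}.ncard ≤ 2 ^ (k + 1) + k := by
  classical
  obtain ⟨N, H, hind, hT, hle, hfill⟩ := h
  have hadj : ∀ x y, G.Adj x y ↔ H.Adj x y ∧ ∀ i, ¬ (x ∈ N i ∧ y ∈ N i) := by
    intro x y
    constructor
    · intro hxy
      exact ⟨hle hxy, fun i hi => (hind i hi.1 hi.2 hxy.ne) hxy⟩
    · rintro ⟨hH, hN⟩
      by_contra hG
      obtain ⟨i, hi⟩ := hfill x y hH hG
      exact hN i hi
  set L : V → Finset (Fin k) := fun x => Finset.univ.filter (fun i => x ∈ N i) with hLdef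
  have hLmem : ∀ x i, i ∈ L x ↔ x ∈ N i := by
    intro x i; simp [hLdef]
  have hL : ∀ {x y : V}, L x = L y → ∀ i, x ∈ N i ↔ y ∈ N i := by
    intro x y hxy i
    rw [← hLmem x i, ← hLmem y i, hxy]
  have step : ∀ x y : V, L x = L y →
      (H.neighborSet x \ {y} ⊆ H.neighborSet y \ {x}) →
      (¬ G.Adj x y → G.neighborSet x ⊆ G.neighborSet y) ∧
      (G.Adj x y → insert x (G.neighborSet x) ⊆ insert y (G.neighborSet y)) := by
    intro x y hlab hsub
    have main : ∀ z, z ≠ y → G.Adj x z → G.Adj y z := by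
      intro z hzy hxz
      obtain ⟨hH, hN⟩ := (hadj x z).1 hxz
      have hz : z ∈ H.neighborSet y \ {x} :=
        hsub ⟨(SimpleGraph.mem_neighborSet _ _ _).2 hH, hzy⟩
      exact (hadj y z).2 ⟨(SimpleGraph.mem_neighborSet _ _ _).1 hz.1,
        fun i hi => hN i ⟨(hL hlab i).2 hi.1, hi.2⟩⟩
    constructor
    · intro hnadj z hz
      rw [SimpleGraph.mem_neighborSet] at hz ⊢
      exact main z (fun hh => hnadj (hh ▸ hz)) hz
    · intro hadjxy z hz
      rcases Set.mem_insert_iff.1 hz with rfl | hz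
      · exact Set.mem_insert_iff.2 (Or.inr ((SimpleGraph.mem_neighborSet _ _ _).2 hadjxy.symm))
      · rw [SimpleGraph.mem_neighborSet] at hz
        by_cases hzy : z = y
        · exact hzy ▸ Set.mem_insert _ _
        · exact Set.mem_insert_iff.2
            (Or.inr ((SimpleGraph.mem_neighborSet _ _ _).2 (main z hzy hz)))
  have not_both : ∀ x y : V, x ≠ y → G.neighborSet x = G.neighborSet y →
      insert x (G.neighborSet x) = insert y (G.neighborSet y) → False := by
    intro x y hne hopen hclosed
    by_cases hadjxy : G.Adj x y
    · have hx : x ∈ G.neighborSet y := (SimpleGraph.mem_neighborSet _ _ _).2 hadjxy.symm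
      rw [← hopen] at hx
      exact G.irrefl ((SimpleGraph.mem_neighborSet _ _ _).1 hx)
    · have hx : x ∈ insert y (G.neighborSet y) := hclosed ▸ Set.mem_insert _ _
      rcases Set.mem_insert_iff.1 hx with h' | h'
      · exact hne h'
      · exact hadjxy ((SimpleGraph.mem_neighborSet _ _ _).1 h').symm
  have key : ∀ x y : V, IsMaximalVertex G x → IsMaximalVertex G y → x ≠ y → L x = L y →
      G.neighborSet x = G.neighborSet y ∨
        insert x (G.neighborSet x) = insert y (G.neighborSet y) := by
    intro x y hmx hmy hne hlab
    rcases threshold_total hT x y with hs | hs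
    · obtain ⟨s1, s2⟩ := step x y hlab hs
      by_cases hadjxy : G.Adj x y
      · right
        by_contra hne'
        exact hmx.2 ⟨y, s2 hadjxy, fun hh => hne' hh.symm⟩
      · left
        by_contra hne'
        exact hmx.1 ⟨y, s1 hadjxy, fun hh => hne' hh.symm⟩
    · obtain ⟨s1, s2⟩ := step y x hlab.symm hs
      by_cases hadjxy : G.Adj x y
      · right
        by_contra hne'
        exact hmy.2 ⟨x, s2 hadjxy.symm, hne'⟩
      · left
        by_contra hne'
        exact hmy.1 ⟨x, s1 (fun hh => hadjxy hh.symm), hne'⟩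
  set Mx : Finset V := Finset.univ.filter (fun x => IsMaximalVertex G x) with hMx
  have hncard : {x : V | IsMaximalVertex G x}.ncard = Mx.card := by
    rw [Set.ncard_eq_toFinset_card']
    congr 1
    ext x
    simp [hMx]
  rw [hncard]
  rw [Finset.card_eq_sum_card_fiberwise (f := L) (t := Finset.univ) (fun x _ => Finset.mem_univ _)]
  have hfib : ∀ A : Finset (Fin k), (Mx.filter (fun x => L x = A)).card ≤
      if A = ∅ then k + 2 else 2 := by
    intro A
    set F := Mx.filter (fun x => L x = A) with hF
    have hFmax : ∀ x ∈ F, IsMaximalVertex G x := by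
      intro x hx
      simp only [hF, hMx, Finset.mem_filter, Finset.mem_univ, true_and] at hx
      exact hx.1
    have hFlab : ∀ x ∈ F, L x = A := by
      intro x hx
      simp only [hF, hMx, Finset.mem_filter, Finset.mem_univ, true_and] at hx
      exact hx.2
    have hkey : ∀ x ∈ F, ∀ y ∈ F, x ≠ y →
        G.neighborSet x = G.neighborSet y ∨
          insert x (G.neighborSet x) = insert y (G.neighborSet y) :=
      fun x hx y hy hne => key x y (hFmax x hx) (hFmax y hy) hne
        ((hFlab x hx).trans (hFlab y hy).symm)
    have no3open : ∀ x ∈ F, ∀ y ∈ F, ∀ z ∈ F, x ≠ y → x ≠ z → y ≠ z →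
        G.neighborSet x = G.neighborSet y → G.neighborSet x = G.neighborSet z → False := by
      intro x hx y hy z hz hxy hxz hyz oxy oxz
      have alleq : ∀ u ∈ ({x, y, z} : Set V), G.neighborSet u = G.neighborSet x := by
        rintro u (rfl | rfl | rfl)
        · rfl
        · exact oxy.symm
        · exact oxz.symm
      refine hmod ⟨{x, y, z}, Or.inl ⟨fun u hu v hv _ => (alleq u hu).trans (alleq v hv).symm, ?_⟩⟩
      rw [Set.ncard_eq_three.2 ⟨x, y, z, hxy, hxz, hyz, rfl⟩]
    by_cases hA : A = ∅
    · rw [if_pos hA]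
      by_contra hc
      push_neg at hc
      by_cases hcl : ∃ u ∈ F, ∃ v ∈ F, u ≠ v ∧
          insert u (G.neighborSet u) = insert v (G.neighborSet v)
      · obtain ⟨u, hu, v, hv, huv, hclo⟩ := hcl
        have hclall : ∀ w ∈ F, w ≠ u →
            insert w (G.neighborSet w) = insert u (G.neighborSet u) := by
          intro w hw hwu
          by_cases hwv : w = v
          · rw [hwv]; exact hclo.symm
          · rcases hkey w hw u hu hwu with ho | hc'
            · rcases hkey w hw v hv hwv with ho2 | hc2
              · exact absurd hclo (fun hh => not_both u v huv (ho.symm.trans ho2) hh)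
              · exact hc2.trans hclo.symm
            · exact hc'
        have hpair : ∀ p ∈ F, ∀ q ∈ F,
            insert p (G.neighborSet p) = insert q (G.neighborSet q) := by
          intro p hp q hq
          by_cases hpu : p = u
          · by_cases hqu : q = u
            · rw [hpu, hqu]
            · rw [hpu]; exact (hclall q hq hqu).symm
          · by_cases hqu : q = u
            · rw [hqu]; exact hclall p hp hpu
            · exact (hclall p hp hpu).trans (hclall q hq hqu).symm
        refine hmod ⟨(F : Set V), Or.inr ⟨fun p hp q hq _ =>
          hpair p (Finset.mem_coe.1 hp) q (Finset.mem_coe.1 hq), ?_⟩⟩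
        rw [Set.ncard_coe_finset]
        omega
      · push_neg at hcl
        have h3 : 2 < F.card := by omega
        obtain ⟨x, hx, y, hy, z, hz, hxy, hxz, hyz⟩ := Finset.two_lt_card.1 h3
        have op : ∀ p ∈ F, ∀ q ∈ F, p ≠ q → G.neighborSet p = G.neighborSet q := by
          intro p hp q hq hne
          rcases hkey p hp q hq hne with hh | hh
          · exact hh
          · exact absurd hh (hcl p hp q hq hne)
        exact no3open x hx y hy z hz hxy hxz hyz (op x hx y hy hxy) (op x hx z hz hxz)
    · rw [if_neg hA]
      have hopenpair : ∀ x ∈ F, ∀ y ∈ F, x ≠ y → G.neighborSet x = G.neighborSet y := by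
        intro x hx y hy hne
        rcases hkey x hx y hy hne with hh | hh
        · exact hh
        · exfalso
          have hadj' : G.Adj x y := by
            have hx' : x ∈ insert y (G.neighborSet y) := hh ▸ Set.mem_insert _ _
            rcases Set.mem_insert_iff.1 hx' with h' | h'
            · exact absurd h' hne
            · exact ((SimpleGraph.mem_neighborSet _ _ _).1 h').symm
          obtain ⟨i, hi⟩ := Finset.nonempty_iff_ne_empty.2 hA
          have hxi : x ∈ N i := (hLmem x i).1 (by rw [hFlab x hx]; exact hi)
          have hyi : y ∈ N i := (hLmem y i).1 (by rw [hFlab y hy]; exact hi)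
          exact ((hadj x y).1 hadj').2 i ⟨hxi, hyi⟩
      by_contra hc
      push_neg at hc
      obtain ⟨x, hx, y, hy, z, hz, hxy, hxz, hyz⟩ := Finset.two_lt_card.1 hc
      exact no3open x hx y hy z hz hxy hxz hyz (hopenpair x hx y hy hxy)
        (hopenpair x hx z hz hxz)
  calc ∑ A : Finset (Fin k), (Mx.filter (fun x => L x = A)).card
      ≤ ∑ A : Finset (Fin k), (if A = ∅ then k + 2 else 2) :=
        Finset.sum_le_sum (fun A _ => hfib A)
    _ = 2 ^ (k + 1) + k := by
        have hsplit : ∀ A : Finset (Fin k),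
            (if A = ∅ then k + 2 else 2) = (if A = ∅ then k else 0) + 2 := by
          intro A; split <;> omega
        simp_rw [hsplit]
        rw [Finset.sum_add_distrib, Finset.sum_const,
          Finset.sum_ite_eq' Finset.univ (∅ : Finset (Fin k)) (fun _ => k)]
        simp only [Finset.mem_univ, if_pos, smul_eq_mul, Finset.card_univ, Fintype.card_finset,
          Fintype.card_fin]
        rw [pow_succ]
        ring
end

section
/- A finite simple graph H is a threshold graph if and only if for every pair of vertices x and y, either N(x) ⊆ N[y] or N(y) ⊆ N[x]. -/
open SimpleGraph

lemma build_emb {V : Type*} (G : SimpleGraph (Fin 4)) (H : SimpleGraph V)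
    (v : Fin 4 → V) (hinj : Function.Injective v)
    (h1 : ∀ i j, G.Adj i j → H.Adj (v i) (v j))
    (h2 : ∀ i j, i ≠ j → ¬G.Adj i j → ¬H.Adj (v i) (v j)) :
    Nonempty (G ↪g H) := by
  refine ⟨⟨⟨v, hinj⟩, ?_⟩⟩
  intro i j
  constructor
  · intro hadj
    by_contra hnG
    exact h2 i j (fun e => hadj.ne (by rw [e])) hnG hadj
  · exact h1 i j

set_option maxHeartbeats 1000000 in
/-- A finite graph is threshold iff for every two vertices `x` and `y`, `N(x) ⊆ N[y]` or
`N(y) ⊆ N[x]`. -/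
theorem isThresholdGraph_iff_chain {V : Type*} [Fintype V] (H : SimpleGraph V) :
    IsThresholdGraph H ↔
      ∀ x y : V,
        H.neighborSet x ⊆ insert y (H.neighborSet y) ∨
        H.neighborSet y ⊆ insert x (H.neighborSet x) := by
  constructor
  · rintro ⟨hP, hC, hK⟩ x y
    by_contra hcon
    rw [not_or] at hcon
    obtain ⟨h1, h2⟩ := hcon
    obtain ⟨a, hax, hay⟩ := Set.not_subset.mp h1
    obtain ⟨b, hby, hbx⟩ := Set.not_subset.mp h2
    simp only [mem_neighborSet, Set.mem_insert_iff, not_or] at hax hay hby hbx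
    obtain ⟨hay1, hay2⟩ := hay
    obtain ⟨hbx1, hbx2⟩ := hbx
    -- hax : H.Adj x a, hay1 : a ≠ y, hay2 : ¬ H.Adj y a
    -- hby : H.Adj y b, hbx1 : b ≠ x, hbx2 : ¬ H.Adj x b
    have haxne : a ≠ x := hax.ne'
    have hbyne : b ≠ y := hby.ne'
    have hxy : x ≠ y := by rintro rfl; exact hay2 hax
    have hab : a ≠ b := by rintro rfl; exact hbx2 hax
    have haxne' := haxne.symm
    have hbyne' := hbyne.symm
    have hxy' := hxy.symm
    have hab' := hab.symm
    have hay1' := Ne.symm hay1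
    have hbx1' := Ne.symm hbx1
    by_cases hA : H.Adj x y <;> by_cases hB : H.Adj a b
    · -- C4 : a-x-y-b-a
      refine hC.elim (Classical.choice ?_)
      apply build_emb _ _ ![a, x, y, b]
      · intro i j
        fin_cases i <;> fin_cases j <;> simp_all (config := {decide := true}) [H.adj_comm]
      · intro i j hij
        fin_cases i <;> fin_cases j <;>
          simp_all (config := {decide := true}) [cycleGraph_adj, H.adj_comm]
      · intro i j hij hGadj
        fin_cases i <;> fin_cases j <;>
          simp_all (config := {decide := true}) [cycleGraph_adj, H.adj_comm]
    · -- P4 : a-x-y-b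
      refine hP.elim (Classical.choice ?_)
      apply build_emb _ _ ![a, x, y, b]
      · intro i j
        fin_cases i <;> fin_cases j <;> simp_all (config := {decide := true}) [H.adj_comm]
      · intro i j hij
        fin_cases i <;> fin_cases j <;>
          simp_all (config := {decide := true}) [pathGraph_adj, H.adj_comm]
      · intro i j hij hGadj
        fin_cases i <;> fin_cases j <;>
          simp_all (config := {decide := true}) [pathGraph_adj, H.adj_comm]
    · -- P4 : x-a-b-y
      refine hP.elim (Classical.choice ?_)
      apply build_emb _ _ ![x, a, b, y]
      · intro i j
        fin_cases i <;> fin_cases j <;> simp_all (config := {decide := true}) [H.adj_comm]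
      · intro i j hij
        fin_cases i <;> fin_cases j <;>
          simp_all (config := {decide := true}) [pathGraph_adj, H.adj_comm]
      · intro i j hij hGadj
        fin_cases i <;> fin_cases j <;>
          simp_all (config := {decide := true}) [pathGraph_adj, H.adj_comm]
    · -- 2K2 : a-x, b-y
      refine hK.elim (Classical.choice ?_)
      apply build_emb _ _ ![a, x, b, y]
      · intro i j
        fin_cases i <;> fin_cases j <;> simp_all (config := {decide := true}) [H.adj_comm]
      · intro i j hij
        fin_cases i <;> fin_cases j <;>
          simp_all (config := {decide := true}) [twoK2, H.adj_comm]
      · intro i j hij hGadj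
        fin_cases i <;> fin_cases j <;>
          simp_all (config := {decide := true}) [twoK2, H.adj_comm]
  · intro h
    have key : ∀ (G : SimpleGraph (Fin 4)) (f : G ↪g H) (x y p q : Fin 4),
        G.Adj x p → ¬ G.Adj y p → p ≠ y → G.Adj y q → ¬ G.Adj x q → q ≠ x → False := by
      intro G f x y p q h1 h2 h3 h4 h5 h6
      rcases h (f x) (f y) with hs | hs
      · have := hs ((H.mem_neighborSet _ _).mpr (f.map_rel_iff.mpr h1))
        simp only [Set.mem_insert_iff, mem_neighborSet] at this
        rcases this with e | e
        · exact h3 (f.injective e)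
        · exact h2 (f.map_rel_iff.mp e)
      · have := hs ((H.mem_neighborSet _ _).mpr (f.map_rel_iff.mpr h4))
        simp only [Set.mem_insert_iff, mem_neighborSet] at this
        rcases this with e | e
        · exact h6 (f.injective e)
        · exact h5 (f.map_rel_iff.mp e)
    refine ⟨⟨fun f => ?_⟩, ⟨fun f => ?_⟩, ⟨fun f => ?_⟩⟩
    · exact key _ f 1 2 0 3 (by simp (config := {decide := true}) [pathGraph_adj]) (by simp (config := {decide := true}) [pathGraph_adj])
        (by decide) (by simp (config := {decide := true}) [pathGraph_adj]) (by simp (config := {decide := true}) [pathGraph_adj]) (by decide)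
    · exact key _ f 0 1 3 2 (by simp (config := {decide := true}) [cycleGraph_adj]) (by simp (config := {decide := true}) [cycleGraph_adj])
        (by decide) (by simp (config := {decide := true}) [cycleGraph_adj]) (by simp (config := {decide := true}) [cycleGraph_adj]) (by decide)
    · exact key _ f 0 2 1 3 (by simp (config := {decide := true}) [twoK2]) (by simp (config := {decide := true}) [twoK2])
        (by decide) (by simp (config := {decide := true}) [twoK2]) (by simp (config := {decide := true}) [twoK2]) (by decide)
end

section
/- A finite simple graph is a threshold graph if and only if every nonempty induced subgraph has an isolated vertex or a universal vertex. -/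
open SimpleGraph

set_option linter.unreachableTactic false
set_option linter.unusedTactic false
set_option linter.unnecessarySeqFocus false

lemma twoK2_adj_s16 {i j : Fin 4} :
    twoK2.Adj i j ↔ (i = 0 ∧ j = 1) ∨ (i = 1 ∧ j = 0) ∨ (i = 2 ∧ j = 3) ∨ (i = 3 ∧ j = 2) := by
  simp only [twoK2, fromEdgeSet_adj, Set.mem_insert_iff, Set.mem_singleton_iff, Sym2.eq,
    Sym2.rel_iff', Prod.mk.injEq, Prod.swap_prod_mk]
  constructor
  · rintro ⟨(⟨h1,h2⟩|⟨h1,h2⟩)|(⟨h1,h2⟩|⟨h1,h2⟩), hne⟩ <;> subst h1 <;> subst h2 <;> simp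
  · rintro (⟨h1,h2⟩|⟨h1,h2⟩|⟨h1,h2⟩|⟨h1,h2⟩) <;> subst h1 <;> subst h2 <;> decide

section Aux
variable {V : Type*} {G : SimpleGraph V}

/-- Build an embedding from a pattern on 4 vertices. -/
def embedOfPattern (H : SimpleGraph (Fin 4)) (f : Fin 4 → V) (hinj : Function.Injective f)
    (h : ∀ i j, G.Adj (f i) (f j) ↔ H.Adj i j) : H ↪g G :=
  ⟨⟨f, hinj⟩, fun {i j} => h i j⟩

lemma noP4 (hG : IsThresholdGraph G) {a b c d : V}
    (hab : G.Adj a b) (hbc : G.Adj b c) (hcd : G.Adj c d)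
    (hac : ¬G.Adj a c) (had : ¬G.Adj a d) (hbd : ¬G.Adj b d) : False := by
  have hnab : a ≠ b := hab.ne
  have hnbc : b ≠ c := hbc.ne
  have hncd : c ≠ d := hcd.ne
  have hnac : a ≠ c := by rintro rfl; exact had hcd
  have hnad : a ≠ d := by rintro rfl; exact hbd hab.symm
  have hnbd : b ≠ d := by rintro rfl; exact had hab
  have hca : ¬G.Adj c a := fun h => hac h.symm
  have hda' : ¬G.Adj d a := fun h => had h.symm
  have hdb : ¬G.Adj d b := fun h => hbd h.symm
  refine hG.1.false (embedOfPattern _ ![a,b,c,d] ?_ ?_)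
  · intro i j hij
    fin_cases i <;> fin_cases j <;> simp_all <;> tauto
  · intro i j
    fin_cases i <;> fin_cases j <;>
      simp [pathGraph_adj, hab, hbc, hcd, hac, had, hbd, hab.symm, hbc.symm, hcd.symm,
        G.irrefl, hca, hda', hdb] <;> decide

lemma noC4 (hG : IsThresholdGraph G) {a b c d : V}
    (hab : G.Adj a b) (hbc : G.Adj b c) (hcd : G.Adj c d) (hda : G.Adj d a)
    (hac : ¬G.Adj a c) (hbd : ¬G.Adj b d) (hnac : a ≠ c) (hnbd : b ≠ d) : False := by
  have hnab : a ≠ b := hab.ne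
  have hnbc : b ≠ c := hbc.ne
  have hncd : c ≠ d := hcd.ne
  have hnad : a ≠ d := hda.ne'
  have hca : ¬G.Adj c a := fun h => hac h.symm
  have hdb : ¬G.Adj d b := fun h => hbd h.symm
  refine hG.2.1.false (embedOfPattern _ ![a,b,c,d] ?_ ?_)
  · intro i j hij
    fin_cases i <;> fin_cases j <;> simp_all <;> tauto
  · intro i j
    fin_cases i <;> fin_cases j <;>
      simp [cycleGraph_adj, hab, hbc, hcd, hda, hac, hbd, hab.symm, hbc.symm, hcd.symm, hda.symm,
        G.irrefl, hca, hdb] <;> decide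

lemma no2K2 (hG : IsThresholdGraph G) {a b c d : V}
    (hab : G.Adj a b) (hcd : G.Adj c d)
    (hac : ¬G.Adj a c) (had : ¬G.Adj a d) (hbc : ¬G.Adj b c) (hbd : ¬G.Adj b d) : False := by
  have hnab : a ≠ b := hab.ne
  have hncd : c ≠ d := hcd.ne
  have hnac : a ≠ c := by rintro rfl; exact had hcd
  have hnad : a ≠ d := by rintro rfl; exact hac hcd.symm
  have hnbc : b ≠ c := by rintro rfl; exact hbd hcd
  have hnbd : b ≠ d := by rintro rfl; exact hbc hcd.symm
  have hca : ¬G.Adj c a := fun h => hac h.symm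
  have hda : ¬G.Adj d a := fun h => had h.symm
  have hcb : ¬G.Adj c b := fun h => hbc h.symm
  have hdb : ¬G.Adj d b := fun h => hbd h.symm
  refine hG.2.2.false (embedOfPattern _ ![a,b,c,d] ?_ ?_)
  · intro i j hij
    fin_cases i <;> fin_cases j <;> simp_all <;> tauto
  · intro i j
    fin_cases i <;> fin_cases j <;>
      simp [twoK2_adj_s16, hab, hcd, hac, had, hbc, hbd, hab.symm, hcd.symm,
        G.irrefl, hca, hda, hcb, hdb] <;> decide

end Aux

/-- A finite graph is threshold iff every nonempty induced subgraph has an isolated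
vertex or a universal vertex. -/
theorem isThresholdGraph_iff_isolated_or_universal {V : Type*} [Fintype V]
    (G : SimpleGraph V) :
    IsThresholdGraph G ↔
      ∀ W : Set V, W.Nonempty →
        (∃ x ∈ W, ∀ y ∈ W, ¬ G.Adj x y) ∨
        (∃ x ∈ W, ∀ y ∈ W, y ≠ x → G.Adj x y) := by
  classical
  constructor
  · -- hard direction
    intro hG W hW
    by_cases hiso : ∃ v ∈ W, ∀ u ∈ W, ¬ G.Adj v u
    · exact Or.inl hiso
    right
    push_neg at hiso
    set N : V → Finset V := fun v => Finset.univ.filter (fun u => u ∈ W ∧ G.Adj v u) with hN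
    have hNmem : ∀ v u, u ∈ N v ↔ u ∈ W ∧ G.Adj v u := by
      intro v u; simp [hN]
    have hWf : W.toFinset.Nonempty := by rwa [Set.toFinset_nonempty]
    obtain ⟨x, hxW, hmax⟩ := W.toFinset.exists_max_image (fun v => (N v).card) hWf
    rw [Set.mem_toFinset] at hxW
    have hmax' : ∀ v ∈ W, (N v).card ≤ (N x).card := by
      intro v hv; exact hmax v (Set.mem_toFinset.mpr hv)
    refine ⟨x, hxW, ?_⟩
    by_contra hy
    push_neg at hy
    obtain ⟨y, hyW, hyx, hxy⟩ := hy
    by_cases hA : ∃ z, z ∈ W ∧ G.Adj y z ∧ ¬ G.Adj x z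
    · -- Case A: y has a neighbor not adjacent to x; then N x ⊊ N y
      obtain ⟨z, hzW, hyz, hxz⟩ := hA
      have hsub : N x ⊆ N y := by
        intro w hw
        rw [hNmem] at hw
        obtain ⟨hwW, hxw⟩ := hw
        rw [hNmem]
        refine ⟨hwW, ?_⟩
        by_contra hwy
        have hwy' : ¬G.Adj w y := fun h => hwy h.symm
        by_cases hwz : G.Adj w z
        · exact absurd (noP4 hG hxw hwz hyz.symm hxz hxy hwy') id
        · exact absurd (no2K2 hG hxw hyz hxy hxz hwy' hwz) id
      have hlt : (N x).card < (N y).card := by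
        refine Finset.card_lt_card ⟨hsub, fun hs => ?_⟩
        have : z ∈ N x := hs ((hNmem y z).mpr ⟨hzW, hyz⟩)
        rw [hNmem] at this
        exact hxz this.2
      exact absurd (hmax' y hyW) (by omega)
    · -- Case B: every neighbor of y is a neighbor of x
      push_neg at hA
      have hA' : ∀ z, z ∈ W → G.Adj y z → G.Adj x z := fun z hz hyz => hA z hz hyz
      obtain ⟨z, hzW, hyz⟩ := hiso y hyW
      have hxz : G.Adj x z := hA' z hzW hyz
      have hxyne : x ≠ y := fun h => hyx h.symm
      have hclique : ∀ z1 z2, z1 ∈ W → z2 ∈ W → G.Adj y z1 → G.Adj y z2 → z1 ≠ z2 →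
          G.Adj z1 z2 := by
        intro z1 z2 h1 h2 hy1 hy2 hne
        by_contra hc
        exact noC4 hG (hA' z1 h1 hy1) hy1.symm hy2 (hA' z2 h2 hy2).symm hxy hc hxyne hne
      have hcross : ∀ w, w ∈ W → G.Adj x w → ¬G.Adj y w → ∀ z', z' ∈ W → G.Adj y z' →
          G.Adj w z' := by
        intro w hwW hxw hyw z' hz'W hyz'
        by_contra hc
        exact noP4 hG hyz' (hA' z' hz'W hyz').symm hxw (fun h => hxy h.symm) hyw
          (fun h => hc h.symm)
      have hsub : insert x (insert y ((N x).erase z)) ⊆ N z := by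
        intro w hw
        rw [Finset.mem_insert, Finset.mem_insert, Finset.mem_erase] at hw
        rw [hNmem]
        rcases hw with rfl | rfl | ⟨hwz, hw⟩
        · exact ⟨hxW, hxz.symm⟩
        · exact ⟨hyW, hyz.symm⟩
        · rw [hNmem] at hw
          obtain ⟨hwW, hxw⟩ := hw
          refine ⟨hwW, ?_⟩
          by_cases hyw : G.Adj y w
          · exact hclique z w hzW hwW hyz hyw (fun h => hwz h.symm)
          · exact (hcross w hwW hxw hyw z hzW hyz).symm
      have hzNx : z ∈ N x := (hNmem x z).mpr ⟨hzW, hxz⟩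
      have hxNx : x ∉ N x := by rw [hNmem]; exact fun h => G.irrefl h.2
      have hyNx : y ∉ N x := by rw [hNmem]; exact fun h => hxy h.2
      have hcard : (insert x (insert y ((N x).erase z))).card = (N x).card + 1 := by
        rw [Finset.card_insert_of_notMem, Finset.card_insert_of_notMem,
          Finset.card_erase_of_mem hzNx]
        · have : 1 ≤ (N x).card := Finset.card_pos.mpr ⟨z, hzNx⟩
          omega
        · exact fun h => hyNx (Finset.mem_of_mem_erase h)
        · rw [Finset.mem_insert]
          rintro (rfl | h)
          · exact hyx rfl
          · exact hxNx (Finset.mem_of_mem_erase h)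
      have := Finset.card_le_card hsub
      have := hmax' z hzW
      omega
  · -- easy direction
    intro h
    refine ⟨⟨fun φ => ?_⟩, ⟨fun φ => ?_⟩, ⟨fun φ => ?_⟩⟩
    · rcases h (Set.range φ) ⟨φ 0, 0, rfl⟩ with ⟨x, ⟨i, rfl⟩, hx⟩ | ⟨x, ⟨i, rfl⟩, hx⟩
      · have : ∃ j, (SimpleGraph.pathGraph 4).Adj i j := by
          fin_cases i
          · exact ⟨1, by simp [pathGraph_adj] <;> decide⟩
          · exact ⟨0, by simp [pathGraph_adj] <;> decide⟩
          · exact ⟨1, by simp [pathGraph_adj] <;> decide⟩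
          · exact ⟨2, by simp [pathGraph_adj] <;> decide⟩
        obtain ⟨j, hj⟩ := this
        exact hx (φ j) ⟨j, rfl⟩ (φ.map_rel_iff.mpr hj)
      · have : ∃ j, j ≠ i ∧ ¬(SimpleGraph.pathGraph 4).Adj i j := by
          fin_cases i
          · exact ⟨2, by simp [pathGraph_adj] <;> decide⟩
          · exact ⟨3, by simp [pathGraph_adj] <;> decide⟩
          · exact ⟨0, by simp [pathGraph_adj] <;> decide⟩
          · exact ⟨0, by simp [pathGraph_adj] <;> decide⟩
        obtain ⟨j, hne, hj⟩ := this
        exact hj (φ.map_rel_iff.mp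
          (hx (φ j) ⟨j, rfl⟩ (fun e => hne (φ.injective e))))
    · rcases h (Set.range φ) ⟨φ 0, 0, rfl⟩ with ⟨x, ⟨i, rfl⟩, hx⟩ | ⟨x, ⟨i, rfl⟩, hx⟩
      · have : ∃ j, (SimpleGraph.cycleGraph 4).Adj i j := by
          fin_cases i
          · exact ⟨1, by simp [cycleGraph_adj] <;> decide⟩
          · exact ⟨2, by simp [cycleGraph_adj] <;> decide⟩
          · exact ⟨3, by simp [cycleGraph_adj] <;> decide⟩
          · exact ⟨0, by simp [cycleGraph_adj] <;> decide⟩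
        obtain ⟨j, hj⟩ := this
        exact hx (φ j) ⟨j, rfl⟩ (φ.map_rel_iff.mpr hj)
      · have : ∃ j, j ≠ i ∧ ¬(SimpleGraph.cycleGraph 4).Adj i j := by
          fin_cases i
          · exact ⟨2, by simp [cycleGraph_adj] <;> decide⟩
          · exact ⟨3, by simp [cycleGraph_adj] <;> decide⟩
          · exact ⟨0, by simp [cycleGraph_adj] <;> decide⟩
          · exact ⟨1, by simp [cycleGraph_adj] <;> decide⟩
        obtain ⟨j, hne, hj⟩ := this
        exact hj (φ.map_rel_iff.mp
          (hx (φ j) ⟨j, rfl⟩ (fun e => hne (φ.injective e))))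
    · rcases h (Set.range φ) ⟨φ 0, 0, rfl⟩ with ⟨x, ⟨i, rfl⟩, hx⟩ | ⟨x, ⟨i, rfl⟩, hx⟩
      · have : ∃ j, twoK2.Adj i j := by
          fin_cases i
          · exact ⟨1, by rw [twoK2_adj_s16]; decide⟩
          · exact ⟨0, by rw [twoK2_adj_s16]; decide⟩
          · exact ⟨3, by rw [twoK2_adj_s16]; decide⟩
          · exact ⟨2, by rw [twoK2_adj_s16]; decide⟩
        obtain ⟨j, hj⟩ := this
        exact hx (φ j) ⟨j, rfl⟩ (φ.map_rel_iff.mpr hj)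
      · have : ∃ j, j ≠ i ∧ ¬twoK2.Adj i j := by
          fin_cases i
          · exact ⟨2, by rw [Ne, twoK2_adj_s16]; decide⟩
          · exact ⟨2, by rw [Ne, twoK2_adj_s16]; decide⟩
          · exact ⟨0, by rw [Ne, twoK2_adj_s16]; decide⟩
          · exact ⟨0, by rw [Ne, twoK2_adj_s16]; decide⟩
        obtain ⟨j, hne, hj⟩ := this
        exact hj (φ.map_rel_iff.mp
          (hx (φ j) ⟨j, rfl⟩ (fun e => hne (φ.injective e))))
end
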